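/- arXiv:2006.03213 — 3 statements merged into one kernel-verified Lean document; each statement's English description precedes it below -/
import Mathlib

section
/- Let G be a graph on n ≥ 4 nodes (n even) with planted bisection V1, V2, induced subgraphs G1 = G[V1], G2 = G[V2], and crossing bipartite graph G0. Assume that G1 and G2 each contain a d_in-regular spanning subgraph (on the same node set), for some d_in ∈ {1,…,n/2 − 1}, and that G0 is a subgraph of some d_out-regular bipartite graph with the same bipartition, for some d_out ∈ {0,…,n/2}. If d_in − d_out ≥ n/4, then the metric LP relaxation recovers the planted bisection (the cut vector x̄ is its unique optimal solution). -/
noncomputable section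
open scoped Classical

/-- `i` and `j` lie on the same side of the planted bisection
`V₁ = {0, …, n/2 - 1}`, `V₂ = {n/2, …, n-1}`. -/
def sameSide (n : ℕ) (i j : Fin n) : Prop :=
  ((i : ℕ) < n / 2 ↔ (j : ℕ) < n / 2)

/-- The sum of `f i j` over all unordered pairs `{i, j}` with `i < j`. -/
def pairSum (n : ℕ) (f : Fin n → Fin n → ℝ) : ℝ :=
  ∑ i : Fin n, ∑ j : Fin n, if i < j then f i j else 0

/-- Feasibility for the metric LP relaxation (LP-P): symmetry of the indexing by
unordered pairs, the triangle inequalities, the perimeter inequalities, and the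
equipartition equality constraint. -/
def LPfeasible (n : ℕ) (x : Fin n → Fin n → ℝ) : Prop :=
  (∀ i j, x i j = x j i) ∧
  (∀ i j k : Fin n, i ≠ j → i ≠ k → j ≠ k → x i j ≤ x i k + x j k) ∧
  (∀ i j k : Fin n, i < j → j < k → x i j + x i k + x j k ≤ 2) ∧
  pairSum n x = (n : ℝ) ^ 2 / 4

/-- The objective function of (LP-P): `∑_{(i,j) ∈ E} x_{ij}`, each edge counted once. -/
def LPobj (n : ℕ) (G : SimpleGraph (Fin n)) (x : Fin n → Fin n → ℝ) : ℝ :=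
  ∑ i : Fin n, ∑ j : Fin n, if i < j ∧ G.Adj i j then x i j else 0

/-- The cut vector of the bisection `(S, Sᶜ)`. -/
def cutVecOf {n : ℕ} (S : Finset (Fin n)) : Fin n → Fin n → ℝ :=
  fun i j => if (i ∈ S ↔ j ∈ S) then 0 else 1

/-- The cut vector of the planted bisection `V₁ = {0, …, n/2 - 1}`, `V₂ = {n/2, …, n-1}`. -/
def cutVec (n : ℕ) : Fin n → Fin n → ℝ :=
  fun i j => if sameSide n i j then 0 else 1

/-- The LP relaxation (LP-P) for the graph `G` recovers the bisection with cut vector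
`xb`: `xb` is feasible, and it is the unique optimal solution (any feasible point
with the same objective value agrees with `xb` on all off-diagonal entries). -/
def LPrecoversOf (n : ℕ) (G : SimpleGraph (Fin n)) (xb : Fin n → Fin n → ℝ) : Prop :=
  LPfeasible n xb ∧
  ∀ x : Fin n → Fin n → ℝ, LPfeasible n x →
    LPobj n G xb ≤ LPobj n G x ∧
    (LPobj n G x = LPobj n G xb → ∀ i j : Fin n, i ≠ j → x i j = xb i j)

/-- The LP relaxation (LP-P) for `G` recovers the planted bisection
`V₁ = {0, …, n/2 - 1}`, `V₂ = {n/2, …, n-1}`. -/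
def LPrecovers (n : ℕ) (G : SimpleGraph (Fin n)) : Prop :=
  LPrecoversOf n G (cutVec n)


section AuxLemmas
open Finset
lemma cnt_lt {n m : ℕ} (h : m ≤ n) :
    ∑ j : Fin n, (if (j : ℕ) < m then (1:ℝ) else 0) = m := by
  rw [Fin.sum_univ_eq_sum_range (fun j => if j < m then (1:ℝ) else 0) n]
  rw [Finset.range_eq_Ico, ← Finset.sum_Ico_consecutive _ (Nat.zero_le m) h]
  have h1 : ∑ j ∈ Finset.Ico 0 m, (if j < m then (1:ℝ) else 0) = m := by
    rw [Finset.sum_congr rfl (fun j hj => if_pos (Finset.mem_Ico.mp hj).2)]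
    simp
  have h2 : ∑ j ∈ Finset.Ico m n, (if j < m then (1:ℝ) else 0) = 0 := by
    refine Finset.sum_eq_zero fun j hj => if_neg (by
      have := (Finset.mem_Ico.mp hj).1; omega)
  rw [h1, h2, add_zero]

lemma order_split {n : ℕ} (g : Fin n → Fin n → ℝ) (p : Fin n → Fin n → Prop)
    [inst : ∀ i j, Decidable (p i j)] (hg : ∀ i j, g i j = g j i) (hp : ∀ i j, p i j ↔ p j i) :
    ∑ i : Fin n, ∑ j : Fin n, (if i ≠ j ∧ p i j then g i j else 0)
      = 2 * ∑ i : Fin n, ∑ j : Fin n, (if i < j ∧ p i j then g i j else 0) := by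
  have step : ∀ i j : Fin n, (if i ≠ j ∧ p i j then g i j else 0)
      = (if i < j ∧ p i j then g i j else 0) + (if j < i ∧ p i j then g i j else 0) := by
    intro i j
    rcases lt_trichotomy i j with h | h | h
    · have : i ≠ j := ne_of_lt h
      by_cases hpij : p i j <;> simp [h, not_lt_of_gt h, this, hpij]
    · simp [h, lt_irrefl]
    · have : i ≠ j := (ne_of_lt h).symm
      by_cases hpij : p i j <;> simp [h, not_lt_of_gt h, this, hpij]
  calc ∑ i : Fin n, ∑ j : Fin n, (if i ≠ j ∧ p i j then g i j else 0)
      = ∑ i : Fin n, ∑ j : Fin n, ((if i < j ∧ p i j then g i j else 0)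
          + (if j < i ∧ p i j then g i j else 0)) := by
        exact Finset.sum_congr rfl fun i _ => Finset.sum_congr rfl fun j _ => step i j
    _ = (∑ i : Fin n, ∑ j : Fin n, (if i < j ∧ p i j then g i j else 0))
        + ∑ i : Fin n, ∑ j : Fin n, (if j < i ∧ p i j then g i j else 0) := by
        rw [← Finset.sum_add_distrib]
        exact Finset.sum_congr rfl fun i _ => Finset.sum_add_distrib
    _ = 2 * ∑ i : Fin n, ∑ j : Fin n, (if i < j ∧ p i j then g i j else 0) := by
        have : ∑ i : Fin n, ∑ j : Fin n, (if j < i ∧ p i j then g i j else 0)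
            = ∑ i : Fin n, ∑ j : Fin n, (if i < j ∧ p i j then g i j else 0) := by
          rw [Finset.sum_comm]
          exact Finset.sum_congr rfl fun j _ => Finset.sum_congr rfl fun i _ => by
            rw [hg i j]
            exact if_congr (and_congr Iff.rfl (hp i j)) rfl rfl
        rw [this]; ring

lemma deg_sum {n : ℕ} (Hg : SimpleGraph (Fin n)) (d : ℕ) (v : Fin n)
    (h : (Hg.neighborSet v).ncard = d) :
    ∑ u : Fin n, (if Hg.Adj v u then (1:ℝ) else 0) = d := by
  rw [Finset.sum_boole]
  norm_num
  have h1 : (univ.filter fun u => Hg.Adj v u) = (Hg.neighborSet v).toFinset := by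
    ext u; rw [Set.mem_toFinset]; simp
  rw [h1, ← Set.ncard_eq_toFinset_card', h]


variable {n m : ℕ} {x : Fin n → Fin n → ℝ}

lemma perim3 (hsym : ∀ i j, x i j = x j i)
    (hperim : ∀ i j k : Fin n, i < j → j < k → x i j + x i k + x j k ≤ 2) :
    ∀ i j k : Fin n, i ≠ j → i ≠ k → j ≠ k → x i j + x i k + x j k ≤ 2 := by
  intro i j k hij hik hjk
  rcases lt_trichotomy i j with h1 | h1 | h1
  · rcases lt_trichotomy j k with h2 | h2 | h2
    · exact hperim i j k h1 h2
    · exact absurd h2 hjk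
    · rcases lt_trichotomy i k with h3 | h3 | h3
      · have := hperim i k j h3 h2; linarith [hsym k j]
      · exact absurd h3 hik
      · have := hperim k i j h3 h1; linarith [hsym k i, hsym k j]
  · exact absurd h1 hij
  · rcases lt_trichotomy i k with h3 | h3 | h3
    · have := hperim j i k h1 h3; linarith [hsym j i]
    · exact absurd h3 hik
    · rcases lt_trichotomy j k with h2 | h2 | h2
      · have := hperim j k i h2 h3; linarith [hsym j i, hsym k i]
      · exact absurd h2 hjk
      · have := hperim k j i h2 h1; linarith [hsym k i, hsym k j, hsym j i]

lemma xnonneg (hn3 : 3 ≤ n)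
    (hsym : ∀ i j, x i j = x j i)
    (htri : ∀ i j k : Fin n, i ≠ j → i ≠ k → j ≠ k → x i j ≤ x i k + x j k) :
    ∀ i j : Fin n, i ≠ j → 0 ≤ x i j := by
  intro i j hij
  have hcard : ({i, j} : Finset (Fin n)).card < (univ : Finset (Fin n)).card := by
    have h1 : ({i, j} : Finset (Fin n)).card ≤ 2 := Finset.card_insert_le _ _ |>.trans (by simp)
    have h2 : (univ : Finset (Fin n)).card = n := by simp
    omega
  have hss : ({i, j} : Finset (Fin n)) ⊂ univ :=
    Finset.ssubset_univ_iff.mpr (fun h => by rw [h] at hcard; exact lt_irrefl _ hcard)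
  obtain ⟨k, -, hk⟩ := Finset.exists_of_ssubset hss
  simp only [Finset.mem_insert, Finset.mem_singleton, not_or] at hk
  have hik : i ≠ k := fun h => hk.1 h.symm
  have hjk : j ≠ k := fun h => hk.2 h.symm
  have t1 := htri i k j hik hij (Ne.symm hjk)
  have t2 := htri j k i hjk (Ne.symm hij) (Ne.symm hik)
  have := hsym k j; have := hsym k i; have := hsym j i
  linarith

lemma cnt_ge {n m : ℕ} (h : m ≤ n) :
    ∑ j : Fin n, (if ¬ ((j : ℕ) < m) then (1:ℝ) else 0) = (n : ℝ) - m := by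
  have key : ∀ j : Fin n, (if ¬ ((j : ℕ) < m) then (1:ℝ) else 0)
      = 1 - (if (j : ℕ) < m then (1:ℝ) else 0) := by
    intro j; by_cases hj : (j : ℕ) < m <;> simp [hj]
  rw [Finset.sum_congr rfl fun j _ => key j, Finset.sum_sub_distrib, cnt_lt h]
  simp

lemma cnt_same {n m : ℕ} (hm : n = m + m) (a : Fin n) :
    ∑ u : Fin n, (if sameSide n a u then (1:ℝ) else 0) = m := by
  have hmn : m ≤ n := by omega
  have hn2 : n / 2 = m := by omega
  by_cases ha : (a : ℕ) < m
  · have : ∀ u : Fin n, (sameSide n a u) ↔ ((u : ℕ) < m) := by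
      intro u; rw [sameSide, hn2]; tauto
    simp only [this]; exact cnt_lt hmn
  · have : ∀ u : Fin n, (sameSide n a u) ↔ ¬((u : ℕ) < m) := by
      intro u; rw [sameSide, hn2]; tauto
    simp only [this]; rw [cnt_ge hmn]; push_cast [hm]; ring

lemma cnt_cross {n m : ℕ} (hm : n = m + m) (a : Fin n) :
    ∑ u : Fin n, (if ¬ sameSide n a u then (1:ℝ) else 0) = m := by
  have hmn : m ≤ n := by omega
  have hn2 : n / 2 = m := by omega
  by_cases ha : (a : ℕ) < m
  · have : ∀ u : Fin n, (¬ sameSide n a u) ↔ ¬((u : ℕ) < m) := by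
      intro u; rw [sameSide, hn2]; tauto
    simp only [this]; rw [cnt_ge hmn]; push_cast [hm]; ring
  · have : ∀ u : Fin n, (¬ sameSide n a u) ↔ ((u : ℕ) < m) := by
      intro u; rw [sameSide, hn2]; tauto
    simp only [this]; exact cnt_lt hmn

lemma sum_ite_eq_pt {n : ℕ} (a : Fin n) (C : Fin n → Prop) :
    ∑ u : Fin n, (if u = a ∧ C u then (1:ℝ) else 0) = if C a then (1:ℝ) else 0 := by
  rw [Finset.sum_eq_single a]
  · by_cases h : C a <;> simp [h]
  · intro u _ hu; simp [hu]
  · intro h; exact absurd (Finset.mem_univ a) h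

lemma cnt_same_ne {n m : ℕ} (hm : n = m + m) (a : Fin n) :
    ∑ u : Fin n, (if u ≠ a ∧ sameSide n a u then (1:ℝ) else 0) = (m : ℝ) - 1 := by
  have key : ∀ u : Fin n, (if u ≠ a ∧ sameSide n a u then (1:ℝ) else 0)
      = (if sameSide n a u then (1:ℝ) else 0) - (if u = a ∧ sameSide n a u then (1:ℝ) else 0) := by
    intro u
    by_cases h1 : u = a
    · subst h1; have : sameSide n u u := Iff.rfl; simp [this]
    · by_cases h2 : sameSide n a u <;> simp [h1, h2]
  rw [Finset.sum_congr rfl fun u _ => key u, Finset.sum_sub_distrib, cnt_same hm,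
    sum_ite_eq_pt a (fun u => sameSide n a u)]
  have : sameSide n a a := Iff.rfl
  simp [this]

lemma cnt_cross_ne (hm : n = m + m) (a k : Fin n) (hk : ¬ sameSide n a k) :
    ∑ l : Fin n, (if ¬ sameSide n a l ∧ ¬ (l = k) then (1:ℝ) else 0) = (m : ℝ) - 1 := by
  have key : ∀ l : Fin n, (if ¬ sameSide n a l ∧ ¬ (l = k) then (1:ℝ) else 0)
      = (if ¬ sameSide n a l then (1:ℝ) else 0) - (if l = k then (1:ℝ) else 0) := by
    intro l
    by_cases h1 : l = k
    · subst h1; simp [hk]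
    · by_cases h2 : sameSide n a l <;> simp [h1, h2]
  rw [Finset.sum_congr rfl fun l _ => key l, Finset.sum_sub_distrib, cnt_cross hm,
    Finset.sum_ite_eq' univ k (fun _ => (1:ℝ)), if_pos (Finset.mem_univ k)]


lemma Ynonneg_raw (hm : n = m + m) (hm2 : 2 ≤ m)
    (hx0 : ∀ i j : Fin n, i ≠ j → 0 ≤ x i j)
    (hper : ∀ i j k : Fin n, i ≠ j → i ≠ k → j ≠ k → x i j + x i k + x j k ≤ 2)
    (a : Fin n) :
    0 ≤ ∑ u : Fin n, (if ¬ sameSide n a u then (1 - x a u) else 0) := by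
  set Y : ℝ := ∑ u : Fin n, (if ¬ sameSide n a u then (1 - x a u) else 0) with hYdef
  have hne : ∀ u : Fin n, ¬ sameSide n a u → a ≠ u := by
    intro u h hh; exact h (hh ▸ Iff.rfl)
  -- condition
  set c : Fin n → Fin n → Prop := fun k l => ¬ sameSide n a k ∧ ¬ sameSide n a l ∧ ¬ (l = k) with hc
  have step0 : (0:ℝ) ≤ ∑ k : Fin n, ∑ l : Fin n, (if c k l then x k l else 0) := by
    refine Finset.sum_nonneg fun k _ => Finset.sum_nonneg fun l _ => ?_
    by_cases h : c k l
    · rw [if_pos h]; exact hx0 k l (fun hh => h.2.2 hh.symm)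
    · rw [if_neg h]
  have step1 : ∀ k l : Fin n, (if c k l then x k l else 0)
      ≤ (if c k l then ((1 - x a k) + (1 - x a l)) else 0) := by
    intro k l
    by_cases h : c k l
    · rw [if_pos h, if_pos h]
      obtain ⟨h1, h2, h3⟩ := h
      have := hper a k l (hne k h1) (hne l h2) (fun hh => h3 hh.symm)
      linarith
    · rw [if_neg h, if_neg h]
  have split : ∑ k : Fin n, ∑ l : Fin n, (if c k l then ((1 - x a k) + (1 - x a l)) else 0)
      = (∑ k : Fin n, ∑ l : Fin n, (if c k l then (1 - x a k) else 0))
        + (∑ k : Fin n, ∑ l : Fin n, (if c k l then (1 - x a l) else 0)) := by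
    rw [← Finset.sum_add_distrib]
    refine Finset.sum_congr rfl fun k _ => ?_
    rw [← Finset.sum_add_distrib]
    refine Finset.sum_congr rfl fun l _ => ?_
    split_ifs <;> ring
  have inner1 : ∀ k : Fin n, (∑ l : Fin n, (if c k l then (1 - x a k) else 0))
      = (if ¬ sameSide n a k then (1 - x a k) * ((m:ℝ) - 1) else 0) := by
    intro k
    by_cases hk : ¬ sameSide n a k
    · rw [if_pos hk]
      have : ∀ l : Fin n, (if c k l then (1 - x a k) else 0)
          = (1 - x a k) * (if ¬ sameSide n a l ∧ ¬ (l = k) then (1:ℝ) else 0) := by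
        intro l
        by_cases hl : ¬ sameSide n a l ∧ ¬ (l = k)
        · rw [if_pos ⟨hk, hl.1, hl.2⟩, if_pos hl]; ring
        · have : ¬ c k l := fun hh => hl ⟨hh.2.1, hh.2.2⟩
          rw [if_neg this, if_neg hl]; ring
      rw [Finset.sum_congr rfl fun l _ => this l, ← Finset.mul_sum, cnt_cross_ne hm a k hk]
    · push_neg at hk
      rw [if_neg (by tauto)]
      refine Finset.sum_eq_zero fun l _ => if_neg (fun hh => hh.1 hk)
  have first : (∑ k : Fin n, ∑ l : Fin n, (if c k l then (1 - x a k) else 0))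
      = ((m:ℝ) - 1) * Y := by
    rw [Finset.sum_congr rfl fun k _ => inner1 k, hYdef, Finset.mul_sum]
    refine Finset.sum_congr rfl fun k _ => ?_
    by_cases hk : ¬ sameSide n a k
    · rw [if_pos hk, if_pos hk]; ring
    · rw [if_neg hk, if_neg hk]; ring
  have inner2 : ∀ l : Fin n, (∑ k : Fin n, (if c k l then (1 - x a l) else 0))
      = (if ¬ sameSide n a l then (1 - x a l) * ((m:ℝ) - 1) else 0) := by
    intro l
    by_cases hl : ¬ sameSide n a l
    · rw [if_pos hl]
      have : ∀ k : Fin n, (if c k l then (1 - x a l) else 0)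
          = (1 - x a l) * (if ¬ sameSide n a k ∧ ¬ (k = l) then (1:ℝ) else 0) := by
        intro k
        by_cases hk : ¬ sameSide n a k ∧ ¬ (k = l)
        · rw [if_pos ⟨hk.1, hl, fun hh => hk.2 hh.symm⟩, if_pos hk]; ring
        · have : ¬ c k l := by
            intro hh; exact hk ⟨hh.1, fun he => hh.2.2 he.symm⟩
          rw [if_neg this, if_neg hk]; ring
      rw [Finset.sum_congr rfl fun k _ => this k, ← Finset.mul_sum, cnt_cross_ne hm a l hl]
    · push_neg at hl
      rw [if_neg (by tauto)]
      refine Finset.sum_eq_zero fun k _ => if_neg (fun hh => hh.2.1 hl)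
  have second : (∑ k : Fin n, ∑ l : Fin n, (if c k l then (1 - x a l) else 0))
      = ((m:ℝ) - 1) * Y := by
    rw [Finset.sum_comm, Finset.sum_congr rfl fun l _ => inner2 l, hYdef, Finset.mul_sum]
    refine Finset.sum_congr rfl fun l _ => ?_
    by_cases hl : ¬ sameSide n a l
    · rw [if_pos hl, if_pos hl]; ring
    · rw [if_neg hl, if_neg hl]; ring
  have total : (0:ℝ) ≤ 2 * (((m:ℝ) - 1) * Y) := by
    have := le_trans step0 (Finset.sum_le_sum fun k _ => Finset.sum_le_sum fun l _ => step1 k l)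
    rw [split, first, second] at this; linarith
  have hmpos : (0:ℝ) < (m:ℝ) - 1 := by
    have : (2:ℝ) ≤ (m:ℝ) := by exact_mod_cast hm2
    linarith
  nlinarith

-- keyA : m (1 - x i k) ≤ Y k + Z i  for crossing (i,k)
lemma keyA_raw (hm : n = m + m)
    (hsym : ∀ i j, x i j = x j i)
    (htri : ∀ i j k : Fin n, i ≠ j → i ≠ k → j ≠ k → x i j ≤ x i k + x j k)
    (i k : Fin n) (hik : ¬ sameSide n i k) :
    (m : ℝ) * (1 - x i k)
      ≤ (∑ u : Fin n, if ¬ sameSide n k u then (1 - x k u) else 0)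
        + (∑ u : Fin n, if u ≠ i ∧ sameSide n i u then x i u else 0) := by
  have e1 : (m : ℝ) * (1 - x i k)
      = ∑ j : Fin n, (if sameSide n i j then (1 - x i k) else 0) := by
    have : ∀ j : Fin n, (if sameSide n i j then (1 - x i k) else 0)
        = (1 - x i k) * (if sameSide n i j then (1:ℝ) else 0) := by
      intro j; split_ifs <;> ring
    rw [Finset.sum_congr rfl fun j _ => this j, ← Finset.mul_sum, cnt_same hm i]; ring
  have e2 : ∀ j : Fin n, (if sameSide n i j then (1 - x i k) else 0)
      ≤ (if sameSide n i j then ((1 - x j k) + (if j ≠ i then x i j else 0)) else 0) := by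
    intro j
    by_cases hj : sameSide n i j
    · simp only [if_pos hj]
      by_cases hji : j = i
      · subst hji; simp
      · rw [if_pos hji]
        have hjk : j ≠ k := fun hh => hik (hh ▸ hj)
        have hik' : i ≠ k := fun hh => hik (by rw [hh]; exact Iff.rfl)
        have t := htri j k i hjk hji (Ne.symm hik')
        have s1 := hsym j i; have s2 := hsym k i
        linarith
    · simp [hj]
  have e3 : ∑ j : Fin n, (if sameSide n i j then ((1 - x j k) + (if j ≠ i then x i j else 0)) else 0)
      = (∑ j : Fin n, if sameSide n i j then (1 - x j k) else 0)
        + (∑ j : Fin n, if sameSide n i j then (if j ≠ i then x i j else 0) else 0) := by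
    rw [← Finset.sum_add_distrib]
    refine Finset.sum_congr rfl fun j _ => ?_
    split_ifs <;> ring
  have e4 : (∑ j : Fin n, if sameSide n i j then (1 - x j k) else 0)
      = ∑ u : Fin n, (if ¬ sameSide n k u then (1 - x k u) else 0) := by
    refine Finset.sum_congr rfl fun j _ => ?_
    have hiff : sameSide n i j ↔ ¬ sameSide n k j := by
      unfold sameSide at *; tauto
    by_cases hj : sameSide n i j
    · rw [if_pos hj, if_pos (hiff.mp hj), hsym j k]
    · rw [if_neg hj, if_neg (fun hh => hj (hiff.mpr hh))]
  have e5 : (∑ j : Fin n, if sameSide n i j then (if j ≠ i then x i j else 0) else 0)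
      = ∑ u : Fin n, (if u ≠ i ∧ sameSide n i u then x i u else 0) := by
    refine Finset.sum_congr rfl fun j _ => ?_
    by_cases h1 : sameSide n i j <;> by_cases h2 : j ≠ i <;> simp [h1, h2]
  calc (m : ℝ) * (1 - x i k) = _ := e1
    _ ≤ _ := Finset.sum_le_sum (fun j _ => e2 j)
    _ = _ := e3
    _ = _ := by rw [e4, e5]


-- keyB : m * x i j ≤ Z i + Z j for same-side i ≠ j
lemma keyB_raw (hm : n = m + m)
    (hsym : ∀ i j, x i j = x j i)
    (htri : ∀ i j k : Fin n, i ≠ j → i ≠ k → j ≠ k → x i j ≤ x i k + x j k)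
    (i j : Fin n) (hij : i ≠ j) (hs : sameSide n i j) :
    (m : ℝ) * x i j
      ≤ (∑ u : Fin n, if u ≠ i ∧ sameSide n i u then x i u else 0)
        + (∑ u : Fin n, if u ≠ j ∧ sameSide n j u then x j u else 0) := by
  have e1 : (m : ℝ) * x i j = ∑ u : Fin n, (if sameSide n i u then x i j else 0) := by
    have : ∀ u : Fin n, (if sameSide n i u then x i j else 0)
        = x i j * (if sameSide n i u then (1:ℝ) else 0) := by intro u; split_ifs <;> ring
    rw [Finset.sum_congr rfl fun u _ => this u, ← Finset.mul_sum, cnt_same hm i]; ring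
  have e2 : ∀ u : Fin n, (if sameSide n i u then x i j else 0)
      ≤ (if sameSide n i u then ((if u ≠ i ∧ sameSide n i u then x i u else 0)
          + (if u ≠ j ∧ sameSide n j u then x j u else 0)) else 0) := by
    intro u
    by_cases hu : sameSide n i u
    · rw [if_pos hu, if_pos hu]
      have hsju : sameSide n j u := by unfold sameSide at *; tauto
      by_cases h1 : u = i
      · subst h1
        have c1 : ¬ (u ≠ u ∧ sameSide n u u) := by simp
        rw [if_neg c1, if_pos ⟨hij, hsju⟩, hsym j u]
        linarith
      · by_cases h2 : u = j
        · subst h2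
          have c2 : ¬ (u ≠ u ∧ sameSide n u u) := by simp
          rw [if_pos ⟨Ne.symm hij, hu⟩, if_neg c2]
          linarith
        · rw [if_pos ⟨h1, hu⟩, if_pos ⟨h2, hsju⟩]
          have t := htri i j u hij (fun hh => h1 hh.symm) (fun hh => h2 hh.symm)
          linarith
    · simp [hu]
  have e3 : ∑ u : Fin n, (if sameSide n i u then ((if u ≠ i ∧ sameSide n i u then x i u else 0)
          + (if u ≠ j ∧ sameSide n j u then x j u else 0)) else 0)
      ≤ (∑ u : Fin n, if u ≠ i ∧ sameSide n i u then x i u else 0)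
        + (∑ u : Fin n, if u ≠ j ∧ sameSide n j u then x j u else 0) := by
    rw [← Finset.sum_add_distrib]
    refine Finset.sum_le_sum fun u _ => ?_
    by_cases hu : sameSide n i u
    · rw [if_pos hu]
    · rw [if_neg hu]
      have h1 : ¬ (u ≠ i ∧ sameSide n i u) := fun hh => hu hh.2
      have hsju : ¬ sameSide n j u := by unfold sameSide at *; tauto
      have h2 : ¬ (u ≠ j ∧ sameSide n j u) := fun hh => hsju hh.2
      rw [if_neg h1, if_neg h2]; norm_num
  exact le_trans (le_of_eq e1) (le_trans (Finset.sum_le_sum fun u _ => e2 u) e3)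

def Zr (n : ℕ) (x : Fin n → Fin n → ℝ) (a : Fin n) : ℝ :=
  ∑ u : Fin n, if u ≠ a ∧ sameSide n a u then x a u else 0

def Yr (n : ℕ) (x : Fin n → Fin n → ℝ) (a : Fin n) : ℝ :=
  ∑ u : Fin n, if ¬ sameSide n a u then (1 - x a u) else 0


lemma ss_symm {n : ℕ} {a b : Fin n} (h : sameSide n a b) : sameSide n b a := Iff.symm h

lemma ss_not_symm {n : ℕ} {a b : Fin n} (h : ¬ sameSide n a b) : ¬ sameSide n b a :=
  fun hh => h (Iff.symm hh)

lemma ss_same_cross {n : ℕ} {a b c : Fin n} (h1 : sameSide n a b) (h2 : ¬ sameSide n a c) :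
    ¬ sameSide n b c := by unfold sameSide at *; tauto

lemma ss_cross_cross {n : ℕ} {a b c : Fin n} (h1 : ¬ sameSide n a b) (h2 : ¬ sameSide n a c) :
    sameSide n b c := by unfold sameSide at *; tauto

lemma sum2_add (f g : Fin n → Fin n → ℝ) :
    (∑ i : Fin n, ∑ j : Fin n, (f i j + g i j))
      = (∑ i : Fin n, ∑ j : Fin n, f i j) + (∑ i : Fin n, ∑ j : Fin n, g i j) := by
  rw [← Finset.sum_add_distrib]
  exact Finset.sum_congr rfl fun i _ => Finset.sum_add_distrib

lemma sum2_sub (f g : Fin n → Fin n → ℝ) :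
    (∑ i : Fin n, ∑ j : Fin n, (f i j - g i j))
      = (∑ i : Fin n, ∑ j : Fin n, f i j) - (∑ i : Fin n, ∑ j : Fin n, g i j) := by
  rw [← Finset.sum_sub_distrib]
  exact Finset.sum_congr rfl fun i _ => Finset.sum_sub_distrib _ _

lemma sum2_congr (f g : Fin n → Fin n → ℝ) (h : ∀ i j, f i j = g i j) :
    (∑ i : Fin n, ∑ j : Fin n, f i j) = (∑ i : Fin n, ∑ j : Fin n, g i j) :=
  Finset.sum_congr rfl fun i _ => Finset.sum_congr rfl fun j _ => h i j

lemma sum2_le (f g : Fin n → Fin n → ℝ) (h : ∀ i j, f i j ≤ g i j) :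
    (∑ i : Fin n, ∑ j : Fin n, f i j) ≤ (∑ i : Fin n, ∑ j : Fin n, g i j) :=
  Finset.sum_le_sum fun i _ => Finset.sum_le_sum fun j _ => h i j

lemma row_factor (c : Fin n → Fin n → Prop) [inst : ∀ i k, Decidable (c i k)] (w : Fin n → ℝ) :
    (∑ i : Fin n, ∑ k : Fin n, if c i k then w i else 0)
      = ∑ i : Fin n, w i * (∑ k : Fin n, if c i k then (1:ℝ) else 0) := by
  refine Finset.sum_congr rfl fun i _ => ?_
  rw [Finset.mul_sum]
  exact Finset.sum_congr rfl fun k _ => by split_ifs <;> ring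



lemma Ynonneg (hm : n = m + m) (hm2 : 2 ≤ m)
    (hx0 : ∀ i j : Fin n, i ≠ j → 0 ≤ x i j)
    (hper : ∀ i j k : Fin n, i ≠ j → i ≠ k → j ≠ k → x i j + x i k + x j k ≤ 2)
    (a : Fin n) : 0 ≤ Yr n x a := by
  simp only [Yr]; exact Ynonneg_raw hm hm2 hx0 hper a

lemma keyA (hm : n = m + m)
    (hsym : ∀ i j, x i j = x j i)
    (htri : ∀ i j k : Fin n, i ≠ j → i ≠ k → j ≠ k → x i j ≤ x i k + x j k)
    (i k : Fin n) (hik : ¬ sameSide n i k) :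
    (m : ℝ) * (1 - x i k) ≤ Yr n x k + Zr n x i := by
  simp only [Yr, Zr]; exact keyA_raw hm hsym htri i k hik

lemma keyB (hm : n = m + m)
    (hsym : ∀ i j, x i j = x j i)
    (htri : ∀ i j k : Fin n, i ≠ j → i ≠ k → j ≠ k → x i j ≤ x i k + x j k)
    (i j : Fin n) (hij : i ≠ j) (hs : sameSide n i j) :
    (m : ℝ) * x i j ≤ Zr n x i + Zr n x j := by
  simp only [Zr]; exact keyB_raw hm hsym htri i j hij hs

lemma ss_trans {n : ℕ} {a b c : Fin n} (h1 : sameSide n a b) (h2 : sameSide n b c) :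
    sameSide n a c := by unfold sameSide at *; tauto

lemma main_core (hm : n = m + m) (hm2 : 2 ≤ m)
    (G H K : SimpleGraph (Fin n)) (d e : ℕ)
    (hHG : H ≤ G)
    (hHside : ∀ i j, H.Adj i j → sameSide n i j)
    (hHdeg : ∀ a : Fin n, ∑ u : Fin n, (if H.Adj a u then (1:ℝ) else 0) = d)
    (hGK : ∀ i j, ¬ sameSide n i j → G.Adj i j → K.Adj i j)
    (hKdeg : ∀ a : Fin n, ∑ u : Fin n, (if K.Adj a u then (1:ℝ) else 0) = e)
    (hde : (m:ℝ) ≤ 2*(d:ℝ) - 2*(e:ℝ))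
    (hsym : ∀ i j, x i j = x j i)
    (htri : ∀ i j k : Fin n, i ≠ j → i ≠ k → j ≠ k → x i j ≤ x i k + x j k)
    (hper : ∀ i j k : Fin n, i ≠ j → i ≠ k → j ≠ k → x i j + x i k + x j k ≤ 2)
    (hsum : ∑ i : Fin n, ∑ j : Fin n, (if i ≠ j then x i j else 0) = 2*(m:ℝ)*(m:ℝ)) :
    (∑ i : Fin n, ∑ j : Fin n, (if i ≠ j ∧ G.Adj i j then (if sameSide n i j then (0:ℝ) else 1) else 0))
      ≤ (∑ i : Fin n, ∑ j : Fin n, (if i ≠ j ∧ G.Adj i j then x i j else 0))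
    ∧ ((∑ i : Fin n, ∑ j : Fin n, (if i ≠ j ∧ G.Adj i j then x i j else 0))
        = (∑ i : Fin n, ∑ j : Fin n, (if i ≠ j ∧ G.Adj i j then (if sameSide n i j then (0:ℝ) else 1) else 0))
      → ∀ i j : Fin n, i ≠ j → x i j = (if sameSide n i j then (0:ℝ) else 1)) := by
  have hn3 : 3 ≤ n := by omega
  have hx0 : ∀ i j : Fin n, i ≠ j → 0 ≤ x i j := xnonneg hn3 hsym htri
  have hne : ∀ a u : Fin n, ¬ sameSide n a u → a ≠ u := by
    intro a u h hh; exact h (hh ▸ Iff.rfl)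
  have hZ0 : ∀ a, 0 ≤ Zr n x a := by
    intro a
    refine Finset.sum_nonneg fun u _ => ?_
    by_cases h : u ≠ a ∧ sameSide n a u
    · rw [if_pos h]; exact hx0 a u (Ne.symm h.1)
    · rw [if_neg h]
  have hSW0 : 0 ≤ ∑ a : Fin n, Zr n x a := Finset.sum_nonneg fun a _ => hZ0 a
  have hY0 : ∀ a, 0 ≤ Yr n x a := fun a => Ynonneg hm hm2 hx0 hper a
  -- balance
  have hXC : (∑ i : Fin n, ∑ u : Fin n, (if ¬ sameSide n i u then x i u else 0))
      = 2*(m:ℝ)*(m:ℝ) - ∑ a : Fin n, Zr n x a := by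
    have e1 : (∑ i : Fin n, ∑ u : Fin n, (if i ≠ u then x i u else 0))
        = (∑ i : Fin n, ∑ u : Fin n, (if u ≠ i ∧ sameSide n i u then x i u else 0))
          + (∑ i : Fin n, ∑ u : Fin n, (if ¬ sameSide n i u then x i u else 0)) := by
      rw [← sum2_add]
      refine sum2_congr _ _ fun i u => ?_
      by_cases h1 : sameSide n i u
      · by_cases h2 : i = u
        · subst h2; simp [h1]
        · simp [h1, h2, Ne.symm h2]
      · have h2 : i ≠ u := hne i u h1
        simp [h1, h2]
    have e2 : (∑ i : Fin n, ∑ u : Fin n, (if u ≠ i ∧ sameSide n i u then x i u else 0))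
        = ∑ a : Fin n, Zr n x a := Finset.sum_congr rfl fun a _ => rfl
    rw [e2] at e1; rw [hsum] at e1; linarith
  have hbal : (∑ a : Fin n, Yr n x a) = ∑ a : Fin n, Zr n x a := by
    have e1 : (∑ a : Fin n, Yr n x a)
        = (∑ i : Fin n, ∑ u : Fin n, (if ¬ sameSide n i u then (1:ℝ) else 0))
          - (∑ i : Fin n, ∑ u : Fin n, (if ¬ sameSide n i u then x i u else 0)) := by
      calc (∑ a : Fin n, Yr n x a)
          = ∑ i : Fin n, ∑ u : Fin n, (if ¬ sameSide n i u then (1 - x i u) else 0) :=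
            Finset.sum_congr rfl fun a _ => by rw [Yr]
        _ = ∑ i : Fin n, ∑ u : Fin n, ((if ¬ sameSide n i u then (1:ℝ) else 0) - (if ¬ sameSide n i u then x i u else 0)) :=
            sum2_congr _ _ fun i u => by split_ifs <;> ring
        _ = _ := sum2_sub _ _
    have e2 : (∑ i : Fin n, ∑ u : Fin n, (if ¬ sameSide n i u then (1:ℝ) else 0)) = 2*(m:ℝ)*(m:ℝ) := by
      rw [Finset.sum_congr rfl fun i _ => cnt_cross hm i, Finset.sum_const, Finset.card_univ,
        Fintype.card_fin, nsmul_eq_mul, hm]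
      push_cast; ring
    rw [e1, e2, hXC]; ring
  -- degree bound for crossing G-edges
  have hdeg0 : ∀ a : Fin n, (∑ u : Fin n, (if ¬ sameSide n a u ∧ G.Adj a u then (1:ℝ) else 0)) ≤ (e:ℝ) := by
    intro a
    rw [← hKdeg a]
    refine Finset.sum_le_sum fun u _ => ?_
    by_cases h : ¬ sameSide n a u ∧ G.Adj a u
    · rw [if_pos h, if_pos (hGK a u h.1 h.2)]
    · rw [if_neg h]
      by_cases h2 : K.Adj a u <;> simp [h2]
  have cnt_nonH : ∀ a : Fin n, (∑ u : Fin n, (if u ≠ a ∧ sameSide n a u ∧ ¬ H.Adj a u then (1:ℝ) else 0))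
      = (m:ℝ) - 1 - (d:ℝ) := by
    intro a
    have key : ∀ u : Fin n, (if u ≠ a ∧ sameSide n a u ∧ ¬ H.Adj a u then (1:ℝ) else 0)
        = (if u ≠ a ∧ sameSide n a u then (1:ℝ) else 0) - (if H.Adj a u then (1:ℝ) else 0) := by
      intro u
      by_cases hHa : H.Adj a u
      · have h1 : u ≠ a := hHa.ne'
        have h2 : sameSide n a u := hHside a u hHa
        simp [hHa, h1, h2]
      · by_cases h3 : u ≠ a ∧ sameSide n a u <;> simp [hHa, h3]
    rw [Finset.sum_congr rfl fun u _ => key u, Finset.sum_sub_distrib, cnt_same_ne hm, hHdeg a]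
  -- Step A
  have stepA : (m:ℝ) * (∑ i : Fin n, ∑ k : Fin n, (if ¬ sameSide n i k ∧ G.Adj i k then (1 - x i k) else 0))
      ≤ 2*(e:ℝ) * (∑ a : Fin n, Zr n x a) := by
    have ptA : ∀ i k : Fin n, (if ¬ sameSide n i k ∧ G.Adj i k then 2*(m:ℝ)*(1 - x i k) else 0)
        ≤ (if ¬ sameSide n i k ∧ G.Adj i k then (Yr n x i + Zr n x i) + (Yr n x k + Zr n x k) else 0) := by
      intro i k
      by_cases h : ¬ sameSide n i k ∧ G.Adj i k
      · rw [if_pos h, if_pos h]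
        have h1 := keyA hm hsym htri i k h.1
        have h2 : ¬ sameSide n k i := ss_not_symm h.1
        have h3 := keyA hm hsym htri k i h2
        rw [hsym k i] at h3
        linarith
      · rw [if_neg h, if_neg h]
    have lhsA : (∑ i : Fin n, ∑ k : Fin n, (if ¬ sameSide n i k ∧ G.Adj i k then 2*(m:ℝ)*(1 - x i k) else 0))
        = 2*(m:ℝ) * (∑ i : Fin n, ∑ k : Fin n, (if ¬ sameSide n i k ∧ G.Adj i k then (1 - x i k) else 0)) := by
      rw [Finset.mul_sum]
      refine Finset.sum_congr rfl fun i _ => ?_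
      rw [Finset.mul_sum]
      exact Finset.sum_congr rfl fun k _ => by split_ifs <;> ring
    have splitA : (∑ i : Fin n, ∑ k : Fin n, (if ¬ sameSide n i k ∧ G.Adj i k then (Yr n x i + Zr n x i) + (Yr n x k + Zr n x k) else 0))
        = (∑ i : Fin n, ∑ k : Fin n, (if ¬ sameSide n i k ∧ G.Adj i k then (Yr n x i + Zr n x i) else 0))
          + (∑ i : Fin n, ∑ k : Fin n, (if ¬ sameSide n i k ∧ G.Adj i k then (Yr n x k + Zr n x k) else 0)) := by
      rw [← sum2_add]
      refine sum2_congr _ _ fun i k => ?_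
      split_ifs <;> ring
    have S1 : (∑ i : Fin n, ∑ k : Fin n, (if ¬ sameSide n i k ∧ G.Adj i k then (Yr n x i + Zr n x i) else 0))
        ≤ (e:ℝ) * ((∑ a : Fin n, Yr n x a) + (∑ a : Fin n, Zr n x a)) := by
      rw [row_factor (fun i k => ¬ sameSide n i k ∧ G.Adj i k) (fun i => Yr n x i + Zr n x i)]
      have e2 : ∀ i : Fin n, (Yr n x i + Zr n x i) * (∑ k : Fin n, (if ¬ sameSide n i k ∧ G.Adj i k then (1:ℝ) else 0))
          ≤ (Yr n x i + Zr n x i) * (e:ℝ) :=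
        fun i => mul_le_mul_of_nonneg_left (hdeg0 i) (by have := hY0 i; have := hZ0 i; linarith)
      refine le_trans (Finset.sum_le_sum fun i _ => e2 i) ?_
      rw [← Finset.sum_mul, Finset.sum_add_distrib, mul_comm]
    have S2 : (∑ i : Fin n, ∑ k : Fin n, (if ¬ sameSide n i k ∧ G.Adj i k then (Yr n x k + Zr n x k) else 0))
        ≤ (e:ℝ) * ((∑ a : Fin n, Yr n x a) + (∑ a : Fin n, Zr n x a)) := by
      rw [Finset.sum_comm]
      have e0 : (∑ k : Fin n, ∑ i : Fin n, (if ¬ sameSide n i k ∧ G.Adj i k then (Yr n x k + Zr n x k) else 0))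
          = (∑ k : Fin n, ∑ i : Fin n, (if ¬ sameSide n k i ∧ G.Adj k i then (Yr n x k + Zr n x k) else 0)) := by
        refine sum2_congr _ _ fun k i => ?_
        have hiff : (¬ sameSide n i k ∧ G.Adj i k) ↔ (¬ sameSide n k i ∧ G.Adj k i) :=
          ⟨fun hh => ⟨ss_not_symm hh.1, hh.2.symm⟩, fun hh => ⟨ss_not_symm hh.1, hh.2.symm⟩⟩
        by_cases h : ¬ sameSide n i k ∧ G.Adj i k
        · rw [if_pos h, if_pos (hiff.mp h)]
        · rw [if_neg h, if_neg (fun hh => h (hiff.mpr hh))]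
      rw [e0, row_factor (fun k i => ¬ sameSide n k i ∧ G.Adj k i) (fun k => Yr n x k + Zr n x k)]
      have e2 : ∀ k : Fin n, (Yr n x k + Zr n x k) * (∑ i : Fin n, (if ¬ sameSide n k i ∧ G.Adj k i then (1:ℝ) else 0))
          ≤ (Yr n x k + Zr n x k) * (e:ℝ) :=
        fun k => mul_le_mul_of_nonneg_left (hdeg0 k) (by have := hY0 k; have := hZ0 k; linarith)
      refine le_trans (Finset.sum_le_sum fun k _ => e2 k) ?_
      rw [← Finset.sum_mul, Finset.sum_add_distrib, mul_comm]
    have chain := le_trans (le_of_eq lhsA.symm)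
      (le_trans (sum2_le _ _ ptA) (le_of_eq splitA))
    have hSC : (∑ a : Fin n, Yr n x a) = ∑ a : Fin n, Zr n x a := hbal
    rw [hSC] at S1 S2
    have := le_trans chain (by linarith : (∑ i : Fin n, ∑ k : Fin n, (if ¬ sameSide n i k ∧ G.Adj i k then (Yr n x i + Zr n x i) else 0))
          + (∑ i : Fin n, ∑ k : Fin n, (if ¬ sameSide n i k ∧ G.Adj i k then (Yr n x k + Zr n x k) else 0))
        ≤ 4*(e:ℝ) * (∑ a : Fin n, Zr n x a))
    linarith
  -- Step B
  have stepB : (m:ℝ) * (∑ i : Fin n, ∑ j : Fin n, (if j ≠ i ∧ sameSide n i j ∧ ¬ H.Adj i j then x i j else 0))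
      ≤ 2*((m:ℝ) - 1 - (d:ℝ)) * (∑ a : Fin n, Zr n x a) := by
    have ptB : ∀ i j : Fin n, (if j ≠ i ∧ sameSide n i j ∧ ¬ H.Adj i j then (m:ℝ) * x i j else 0)
        ≤ (if j ≠ i ∧ sameSide n i j ∧ ¬ H.Adj i j then Zr n x i + Zr n x j else 0) := by
      intro i j
      by_cases h : j ≠ i ∧ sameSide n i j ∧ ¬ H.Adj i j
      · rw [if_pos h, if_pos h]
        exact keyB hm hsym htri i j (Ne.symm h.1) h.2.1
      · rw [if_neg h, if_neg h]
    have lhsB : (∑ i : Fin n, ∑ j : Fin n, (if j ≠ i ∧ sameSide n i j ∧ ¬ H.Adj i j then (m:ℝ) * x i j else 0))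
        = (m:ℝ) * (∑ i : Fin n, ∑ j : Fin n, (if j ≠ i ∧ sameSide n i j ∧ ¬ H.Adj i j then x i j else 0)) := by
      rw [Finset.mul_sum]
      refine Finset.sum_congr rfl fun i _ => ?_
      rw [Finset.mul_sum]
      exact Finset.sum_congr rfl fun j _ => by split_ifs <;> ring
    have splitB : (∑ i : Fin n, ∑ j : Fin n, (if j ≠ i ∧ sameSide n i j ∧ ¬ H.Adj i j then Zr n x i + Zr n x j else 0))
        = (∑ i : Fin n, ∑ j : Fin n, (if j ≠ i ∧ sameSide n i j ∧ ¬ H.Adj i j then Zr n x i else 0))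
          + (∑ i : Fin n, ∑ j : Fin n, (if j ≠ i ∧ sameSide n i j ∧ ¬ H.Adj i j then Zr n x j else 0)) := by
      rw [← sum2_add]
      refine sum2_congr _ _ fun i j => ?_
      split_ifs <;> ring
    have T1 : (∑ i : Fin n, ∑ j : Fin n, (if j ≠ i ∧ sameSide n i j ∧ ¬ H.Adj i j then Zr n x i else 0))
        = ((m:ℝ) - 1 - (d:ℝ)) * (∑ a : Fin n, Zr n x a) := by
      rw [row_factor (fun i j => j ≠ i ∧ sameSide n i j ∧ ¬ H.Adj i j) (fun i => Zr n x i),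
        Finset.sum_congr rfl fun i _ => by rw [cnt_nonH i], ← Finset.sum_mul, mul_comm]
    have T2 : (∑ i : Fin n, ∑ j : Fin n, (if j ≠ i ∧ sameSide n i j ∧ ¬ H.Adj i j then Zr n x j else 0))
        = ((m:ℝ) - 1 - (d:ℝ)) * (∑ a : Fin n, Zr n x a) := by
      rw [Finset.sum_comm]
      have e0 : (∑ j : Fin n, ∑ i : Fin n, (if j ≠ i ∧ sameSide n i j ∧ ¬ H.Adj i j then Zr n x j else 0))
          = (∑ j : Fin n, ∑ i : Fin n, (if i ≠ j ∧ sameSide n j i ∧ ¬ H.Adj j i then Zr n x j else 0)) := by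
        refine sum2_congr _ _ fun j i => ?_
        have hiff : (j ≠ i ∧ sameSide n i j ∧ ¬ H.Adj i j) ↔ (i ≠ j ∧ sameSide n j i ∧ ¬ H.Adj j i) := by
          constructor
          · rintro ⟨a1, a2, a3⟩
            exact ⟨Ne.symm a1, ss_symm a2, fun hh => a3 hh.symm⟩
          · rintro ⟨a1, a2, a3⟩
            exact ⟨Ne.symm a1, ss_symm a2, fun hh => a3 hh.symm⟩
        by_cases h : j ≠ i ∧ sameSide n i j ∧ ¬ H.Adj i j
        · rw [if_pos h, if_pos (hiff.mp h)]
        · rw [if_neg h, if_neg (fun hh => h (hiff.mpr hh))]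
      rw [e0, row_factor (fun j i => i ≠ j ∧ sameSide n j i ∧ ¬ H.Adj j i) (fun j => Zr n x j),
        Finset.sum_congr rfl fun j _ => by rw [cnt_nonH j], ← Finset.sum_mul, mul_comm]
    have chain := le_trans (le_of_eq lhsB.symm) (le_trans (sum2_le _ _ ptB) (le_of_eq splitB))
    rw [T1, T2] at chain
    linarith
  -- split SW
  have splitSW : (∑ a : Fin n, Zr n x a)
      = (∑ i : Fin n, ∑ j : Fin n, (if H.Adj i j then x i j else 0))
        + (∑ i : Fin n, ∑ j : Fin n, (if j ≠ i ∧ sameSide n i j ∧ ¬ H.Adj i j then x i j else 0)) := by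
    rw [← sum2_add]
    refine Finset.sum_congr rfl fun i _ => ?_
    rw [Zr]
    refine Finset.sum_congr rfl fun j _ => ?_
    by_cases hHa : H.Adj i j
    · have h1 : j ≠ i := hHa.ne'
      have h2 : sameSide n i j := hHside i j hHa
      simp [hHa, h1, h2]
    · by_cases h3 : j ≠ i ∧ sameSide n i j <;> simp [hHa, h3]
  -- XH ≤ OW
  have hXHOW : (∑ i : Fin n, ∑ j : Fin n, (if H.Adj i j then x i j else 0))
      ≤ (∑ i : Fin n, ∑ j : Fin n, (if sameSide n i j ∧ G.Adj i j then x i j else 0)) := by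
    refine sum2_le _ _ fun i j => ?_
    by_cases hHa : H.Adj i j
    · rw [if_pos hHa, if_pos ⟨hHside i j hHa, hHG hHa⟩]
    · rw [if_neg hHa]
      by_cases h2 : sameSide n i j ∧ G.Adj i j
      · rw [if_pos h2]; exact hx0 i j h2.2.ne
      · rw [if_neg h2]
  have hmR : (0:ℝ) < (m:ℝ) := by
    have : 0 < m := by omega
    exact_mod_cast this
  have hOWlow : ((2:ℝ)*(d:ℝ) + 2 - (m:ℝ)) * (∑ a : Fin n, Zr n x a)
      ≤ (m:ℝ) * (∑ i : Fin n, ∑ j : Fin n, (if sameSide n i j ∧ G.Adj i j then x i j else 0)) := by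
    have h1 := mul_le_mul_of_nonneg_left hXHOW (le_of_lt hmR)
    have h2 : (m:ℝ) * (∑ a : Fin n, Zr n x a)
        = (m:ℝ) * (∑ i : Fin n, ∑ j : Fin n, (if H.Adj i j then x i j else 0))
          + (m:ℝ) * (∑ i : Fin n, ∑ j : Fin n, (if j ≠ i ∧ sameSide n i j ∧ ¬ H.Adj i j then x i j else 0)) := by
      rw [splitSW]; ring
    linarith [h1, h2, stepB]
  -- objective identities
  have splitOBJ : (∑ i : Fin n, ∑ j : Fin n, (if i ≠ j ∧ G.Adj i j then x i j else 0))
      = (∑ i : Fin n, ∑ j : Fin n, (if sameSide n i j ∧ G.Adj i j then x i j else 0))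
        + (∑ i : Fin n, ∑ j : Fin n, (if ¬ sameSide n i j ∧ G.Adj i j then x i j else 0)) := by
    rw [← sum2_add]
    refine sum2_congr _ _ fun i j => ?_
    by_cases hA : G.Adj i j
    · have hne' : i ≠ j := hA.ne
      by_cases hs : sameSide n i j
      · simp [hA, hne', hs]
      · simp [hA, hne', hs]
    · simp [hA]
  have hOBJc : (∑ i : Fin n, ∑ j : Fin n, (if i ≠ j ∧ G.Adj i j then (if sameSide n i j then (0:ℝ) else 1) else 0))
      = (∑ i : Fin n, ∑ j : Fin n, (if ¬ sameSide n i j ∧ G.Adj i j then (1:ℝ) else 0)) := by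
    refine sum2_congr _ _ fun i j => ?_
    by_cases hA : G.Adj i j
    · have hne' : i ≠ j := hA.ne
      by_cases hs : sameSide n i j
      · simp [hA, hne', hs]
      · simp [hA, hne', hs]
    · simp [hA]
  have hOCsplit : (∑ i : Fin n, ∑ k : Fin n, (if ¬ sameSide n i k ∧ G.Adj i k then (1 - x i k) else 0))
      = (∑ i : Fin n, ∑ j : Fin n, (if ¬ sameSide n i j ∧ G.Adj i j then (1:ℝ) else 0))
        - (∑ i : Fin n, ∑ j : Fin n, (if ¬ sameSide n i j ∧ G.Adj i j then x i j else 0)) := by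
    rw [← sum2_sub]
    refine sum2_congr _ _ fun i j => ?_
    split_ifs <;> ring
  -- final
  have hmain : 2 * (∑ a : Fin n, Zr n x a)
      ≤ (m:ℝ) * ((∑ i : Fin n, ∑ j : Fin n, (if i ≠ j ∧ G.Adj i j then x i j else 0))
          - (∑ i : Fin n, ∑ j : Fin n, (if i ≠ j ∧ G.Adj i j then (if sameSide n i j then (0:ℝ) else 1) else 0))) := by
    have hdiff : (∑ i : Fin n, ∑ j : Fin n, (if i ≠ j ∧ G.Adj i j then x i j else 0))
        - (∑ i : Fin n, ∑ j : Fin n, (if i ≠ j ∧ G.Adj i j then (if sameSide n i j then (0:ℝ) else 1) else 0))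
        = (∑ i : Fin n, ∑ j : Fin n, (if sameSide n i j ∧ G.Adj i j then x i j else 0))
          - (∑ i : Fin n, ∑ k : Fin n, (if ¬ sameSide n i k ∧ G.Adj i k then (1 - x i k) else 0)) := by
      rw [splitOBJ, hOBJc, hOCsplit]; ring
    rw [hdiff, mul_sub]
    have hcoef : (0:ℝ) ≤ (2*(d:ℝ) - 2*(e:ℝ) - (m:ℝ)) := by linarith
    linarith [stepA, hOWlow, mul_nonneg hcoef hSW0]
  constructor
  · nlinarith [hmain, hSW0, hmR]
  · intro heq i j hij
    have hSWzero : (∑ a : Fin n, Zr n x a) = 0 := by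
      rw [heq] at hmain
      simp only [sub_self, mul_zero] at hmain
      linarith
    have hZzero : ∀ a, Zr n x a = 0 := by
      intro a
      have := (Finset.sum_eq_zero_iff_of_nonneg (fun a _ => hZ0 a)).mp hSWzero
      exact this a (Finset.mem_univ a)
    have hzW : ∀ a u : Fin n, u ≠ a → sameSide n a u → x a u = 0 := by
      intro a u h1 h2
      have h3 := (Finset.sum_eq_zero_iff_of_nonneg (fun u _ => by
        by_cases h : u ≠ a ∧ sameSide n a u
        · rw [if_pos h]; exact hx0 a u (Ne.symm h.1)
        · rw [if_neg h])).mp (hZzero a)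
      have := h3 u (Finset.mem_univ u)
      rwa [if_pos ⟨h1, h2⟩] at this
    -- all crossing values are equal
    have crossEq : ∀ i k j : Fin n, ¬ sameSide n i k → sameSide n i j → x i k = x j k := by
      intro i k j hik hij'
      by_cases hji : j = i
      · subst hji; rfl
      · have hjk : ¬ sameSide n j k := ss_same_cross hij' hik
        have hik' : i ≠ k := hne i k hik
        have hjk' : j ≠ k := hne j k hjk
        have hij'' : i ≠ j := fun hh => hji hh.symm
        have t1 := htri i k j hik' hij'' (Ne.symm hjk')
        have t2 := htri j k i hjk' (fun hh => hij'' hh.symm) (Ne.symm hik')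
        have z1 : x i j = 0 := hzW i j (Ne.symm hij'') hij'
        have z2 : x j i = 0 := by rw [hsym j i]; exact z1
        have s1 := hsym k j; have s2 := hsym k i
        linarith
    have crossEq2 : ∀ i k l : Fin n, ¬ sameSide n i k → sameSide n k l → x i k = x i l := by
      intro i k l hik hkl
      have h1 : ¬ sameSide n k i := ss_not_symm hik
      have := crossEq k i l h1 hkl
      rw [hsym k i, hsym l i] at this
      exact this
    have allc : ∀ a b a' b' : Fin n, ¬ sameSide n a b → ¬ sameSide n a' b' → x a' b' = x a b := by
      intro a b a' b' hab ha'b'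
      by_cases haa' : sameSide n a a'
      · have h1 : x a' b' = x a b' := crossEq a' b' a ha'b' (ss_symm haa')
        have hab' : ¬ sameSide n a b' := ss_same_cross (ss_symm haa') ha'b'
        have h2 : x a b' = x a b := crossEq2 a b' b hab' (ss_cross_cross hab' hab)
        rw [h1, h2]
      · have h1 : x a' b' = x b' a' := hsym a' b'
        have h2 : x b' a' = x a a' :=
          crossEq b' a' a (ss_not_symm ha'b') (ss_cross_cross ha'b' (ss_not_symm haa'))
        have h3 : x a a' = x a b := crossEq2 a a' b haa' (ss_cross_cross haa' hab)
        rw [h1, h2, h3]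
    -- conclude
    by_cases hs : sameSide n i j
    · rw [if_pos hs]
      exact hzW i j (Ne.symm hij) hs
    · rw [if_neg hs]
      -- show x i j = 1 using SC = 0
      have hSCzero : (∑ a : Fin n, Yr n x a) = 0 := by rw [hbal, hSWzero]
      have hval : (∑ a : Fin n, Yr n x a)
          = (1 - x i j) * (2*(m:ℝ)*(m:ℝ)) := by
        have e1 : ∀ a : Fin n, Yr n x a
            = (1 - x i j) * (∑ u : Fin n, (if ¬ sameSide n a u then (1:ℝ) else 0)) := by
          intro a
          rw [Yr, Finset.mul_sum]
          refine Finset.sum_congr rfl fun u _ => ?_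
          by_cases h : ¬ sameSide n a u
          · rw [if_pos h, if_pos h]
            rw [allc a u i j h hs]
            ring
          · rw [if_neg h, if_neg h]; ring
        rw [Finset.sum_congr rfl fun a _ => e1 a, ← Finset.mul_sum,
          Finset.sum_congr rfl fun a _ => cnt_cross hm a, Finset.sum_const, Finset.card_univ,
          Fintype.card_fin, nsmul_eq_mul, hm]
        push_cast; ring
    -- derive x i j = 1
      rw [hval] at hSCzero
      have hm2R : (0:ℝ) < 2*(m:ℝ)*(m:ℝ) := by positivity
      have : 1 - x i j = 0 := by
        rcases mul_eq_zero.mp hSCzero with h | h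
        · exact h
        · exact absurd h (ne_of_gt hm2R)
      linarith

end AuxLemmas
section FinalAssembly
open Finset
lemma cutFeasible {n m : ℕ} (hm : n = m + m) (hm2 : 2 ≤ m) : LPfeasible n (cutVec n) := by
  have hsymc : ∀ i j : Fin n, cutVec n i j = cutVec n j i := by
    intro i j; simp only [cutVec]
    by_cases hh : sameSide n i j
    · rw [if_pos hh, if_pos (ss_symm hh)]
    · rw [if_neg hh, if_neg (ss_not_symm hh)]
  refine ⟨hsymc, ?_, ?_, ?_⟩
  · intro i j k hij hik hjk
    simp only [cutVec]
    by_cases h1 : sameSide n i j <;> by_cases h2 : sameSide n i k <;> by_cases h3 : sameSide n j k <;>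
      simp [h1, h2, h3] <;> norm_num
    exact absurd (ss_trans h2 (ss_symm h3)) h1
  · intro i j k hij hjk
    simp only [cutVec]
    by_cases h1 : sameSide n i j <;> by_cases h2 : sameSide n i k <;> by_cases h3 : sameSide n j k <;>
      simp [h1, h2, h3] <;> norm_num
    exact absurd (ss_cross_cross h1 h2) h3
  · have ord := order_split (cutVec n) (fun _ _ => True) hsymc (fun _ _ => Iff.rfl)
    have c1 : (∑ i : Fin n, ∑ j : Fin n, (if i ≠ j ∧ True then cutVec n i j else 0))
        = ∑ i : Fin n, ∑ j : Fin n, (if ¬ sameSide n i j then (1:ℝ) else 0) := by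
      refine sum2_congr _ _ fun i j => ?_
      by_cases hij : i = j
      · subst hij
        have : sameSide n i i := Iff.rfl
        simp [this]
      · simp only [cutVec, hij, true_and, and_true, ne_eq, not_false_iff, if_true]
        by_cases hs : sameSide n i j <;> simp [hs]
    have c2 : (∑ i : Fin n, ∑ j : Fin n, (if i < j ∧ True then cutVec n i j else 0))
        = pairSum n (cutVec n) := by
      rw [pairSum]
      exact sum2_congr _ _ fun i j => by simp
    have ord2 : (∑ i : Fin n, ∑ j : Fin n, (if i ≠ j ∧ True then cutVec n i j else 0))
        = 2 * ∑ i : Fin n, ∑ j : Fin n, (if i < j ∧ True then cutVec n i j else 0) := ord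
    rw [c1, c2] at ord2
    have c3 : (∑ i : Fin n, ∑ j : Fin n, (if ¬ sameSide n i j then (1:ℝ) else 0))
        = 2*(m:ℝ)*(m:ℝ) := by
      rw [Finset.sum_congr rfl fun i _ => cnt_cross hm i, Finset.sum_const, Finset.card_univ,
        Fintype.card_fin, nsmul_eq_mul, hm]
      push_cast; ring
    rw [c3] at ord2
    have hnm : (n:ℝ) = 2*(m:ℝ) := by rw [hm]; push_cast; ring
    rw [hnm]
    nlinarith [ord2]

end FinalAssembly
/-- Suppose the within-part graphs `G₁, G₂` of `G` each contain a
`d_in`-regular spanning subgraph (here packaged as a single spanning subgraph `H ≤ G`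
consisting only of within-part edges, all of whose nodes have degree `d_in`), with
`d_in ∈ {1, …, n/2 - 1}`, and the crossing bipartite graph `G₀` of `G` is a subgraph
of a `d_out`-regular bipartite graph `K` with the same bipartition, with
`d_out ∈ {0, …, n/2}`.  If `d_in - d_out ≥ n/4`, then the metric LP relaxation
recovers the planted bisection. -/
theorem lp_recovery_general (n : ℕ) (hn : Even n) (hn4 : 4 ≤ n)
    (G : SimpleGraph (Fin n)) (din dout : ℕ)
    (hdin1 : 1 ≤ din) (hdin2 : din ≤ n / 2 - 1) (hdout : dout ≤ n / 2)
    (hH : ∃ H : SimpleGraph (Fin n), H ≤ G ∧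
      (∀ i j : Fin n, H.Adj i j → sameSide n i j) ∧
      (∀ v : Fin n, (H.neighborSet v).ncard = din))
    (hK : ∃ K : SimpleGraph (Fin n),
      (∀ i j : Fin n, K.Adj i j → ¬ sameSide n i j) ∧
      (∀ i j : Fin n, ¬ sameSide n i j → G.Adj i j → K.Adj i j) ∧
      (∀ v : Fin n, (K.neighborSet v).ncard = dout))
    (h : (din : ℝ) - (dout : ℝ) ≥ (n : ℝ) / 4) :
    LPrecovers n G := by
  classical
  obtain ⟨H, hHG, hHside, hHdegN⟩ := hH
  obtain ⟨K, hKside, hGK, hKdegN⟩ := hK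
  obtain ⟨m, hm⟩ := hn
  have hm2 : 2 ≤ m := by omega
  have hnm : (n:ℝ) = 2*(m:ℝ) := by rw [hm]; push_cast; ring
  have hde : (m:ℝ) ≤ 2*(din:ℝ) - 2*(dout:ℝ) := by
    have h4 : (n:ℝ)/4 = (m:ℝ)/2 := by rw [hnm]; ring
    rw [ge_iff_le, h4] at h
    linarith
  have hHdeg : ∀ a : Fin n, (∑ u : Fin n, (if H.Adj a u then (1:ℝ) else 0)) = din :=
    fun a => deg_sum H din a (hHdegN a)
  have hKdeg : ∀ a : Fin n, (∑ u : Fin n, (if K.Adj a u then (1:ℝ) else 0)) = dout :=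
    fun a => deg_sum K dout a (hKdegN a)
  constructor
  · exact cutFeasible hm hm2
  · intro x hx
    obtain ⟨hsym, htri, hperimS, hsum⟩ := hx
    have hper := perim3 hsym hperimS
    have hsum' : (∑ i : Fin n, ∑ j : Fin n, (if i ≠ j then x i j else 0)) = 2*(m:ℝ)*(m:ℝ) := by
      have o := order_split x (fun _ _ => True) hsym (fun _ _ => Iff.rfl)
      have c1 : (∑ i : Fin n, ∑ j : Fin n, (if i ≠ j ∧ True then x i j else 0))
          = ∑ i : Fin n, ∑ j : Fin n, (if i ≠ j then x i j else 0) :=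
        sum2_congr _ _ fun i j => by simp
      have c2 : (∑ i : Fin n, ∑ j : Fin n, (if i < j ∧ True then x i j else 0))
          = pairSum n x := by
        rw [pairSum]
        exact sum2_congr _ _ fun i j => by simp
      have o2 : (∑ i : Fin n, ∑ j : Fin n, (if i ≠ j ∧ True then x i j else 0))
          = 2 * ∑ i : Fin n, ∑ j : Fin n, (if i < j ∧ True then x i j else 0) := o
      rw [c1, c2, hsum] at o2
      rw [o2, hnm]; ring
    have core := main_core hm hm2 G H K din dout hHG hHside hHdeg hGK hKdeg hde hsym htri hper hsum'
    have objx : (∑ i : Fin n, ∑ j : Fin n, (if i ≠ j ∧ G.Adj i j then x i j else 0))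
        = 2 * LPobj n G x := by
      rw [LPobj]
      exact order_split x G.Adj hsym (fun i j => G.adj_comm i j)
    have csym : ∀ i j : Fin n, (if sameSide n i j then (0:ℝ) else 1) = (if sameSide n j i then (0:ℝ) else 1) := by
      intro i j
      by_cases hh : sameSide n i j
      · rw [if_pos hh, if_pos (ss_symm hh)]
      · rw [if_neg hh, if_neg (ss_not_symm hh)]
    have objc : (∑ i : Fin n, ∑ j : Fin n, (if i ≠ j ∧ G.Adj i j then (if sameSide n i j then (0:ℝ) else 1) else 0))
        = 2 * LPobj n G (cutVec n) := by
      rw [LPobj]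
      have o : (∑ i : Fin n, ∑ j : Fin n, (if i ≠ j ∧ G.Adj i j then (if sameSide n i j then (0:ℝ) else 1) else 0))
          = 2 * ∑ i : Fin n, ∑ j : Fin n, (if i < j ∧ G.Adj i j then (if sameSide n i j then (0:ℝ) else 1) else 0) :=
        order_split (fun i j => if sameSide n i j then (0:ℝ) else 1) G.Adj csym (fun i j => G.adj_comm i j)
      rw [o]
      have : (∑ i : Fin n, ∑ j : Fin n, (if i < j ∧ G.Adj i j then (if sameSide n i j then (0:ℝ) else 1) else 0))
          = ∑ i : Fin n, ∑ j : Fin n, (if i < j ∧ G.Adj i j then cutVec n i j else 0) :=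
        sum2_congr _ _ fun i j => by simp [cutVec]
      rw [this]
    constructor
    · have h1 := core.1
      rw [objx, objc] at h1
      linarith
    · intro heq i j hij
      have heq' : (∑ i : Fin n, ∑ j : Fin n, (if i ≠ j ∧ G.Adj i j then x i j else 0))
          = (∑ i : Fin n, ∑ j : Fin n, (if i ≠ j ∧ G.Adj i j then (if sameSide n i j then (0:ℝ) else 1) else 0)) := by
        rw [objx, objc, heq]
      have := core.2 heq' i j hij
      simp only [cutVec]
      exact this
end
end

section
/- Let G = (V,E) be a connected graph on n ≥ 5 nodes (n even) with a planted bisection, and define c(G) = max{0, (3ρ_max(G) − 4ρ_avg(G))/(1 − 4/n)}. If ((1 + c(G)) / (2ρ_avg(G) + 2c(G)(1 − 1/n))) · |E| < |E0|, then the metric LP relaxation does not recover the planted bisection: there exists a feasible point of (LP-P) whose objective value is strictly smaller than |E0|, the objective value of the planted cut vector. -/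
noncomputable section
open scoped Classical

/-- The diameter `ρ_max(G)` of `G`: the maximum of the shortest-path distance over
all pairs of nodes. -/
def rhoMax {n : ℕ} (G : SimpleGraph (Fin n)) : ℕ :=
  (Finset.univ : Finset (Fin n × Fin n)).sup (fun p => G.dist p.1 p.2)

/-- The average distance `ρ_avg(G) = (2/n²) ∑_{i<j} ρ_G(i,j)` of `G`. -/
def rhoAvg (n : ℕ) (G : SimpleGraph (Fin n)) : ℝ :=
  (2 / (n : ℝ) ^ 2) * pairSum n (fun i j => (G.dist i j : ℝ))

/-- The quantity `c(G) = max {0, (3ρ_max(G) - 4ρ_avg(G)) / (1 - 4/n)}`. -/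
def cConst (n : ℕ) (G : SimpleGraph (Fin n)) : ℝ :=
  max 0 ((3 * (rhoMax G : ℝ) - 4 * rhoAvg n G) / (1 - 4 / (n : ℝ)))

/-- The number of edges of `G` crossing the bisection `(S, Sᶜ)`, i.e. `|E₀|`; each
crossing edge is counted once, as the ordered pair whose first component lies in
`S`. -/
def cutCost {n : ℕ} (G : SimpleGraph (Fin n)) (S : Finset (Fin n)) : ℕ :=
  ((Finset.univ : Finset (Fin n × Fin n)).filter
    (fun p => G.Adj p.1 p.2 ∧ p.1 ∈ S ∧ p.2 ∉ S)).card


private lemma twice_sum' {n : ℕ} (f : Fin n → Fin n → ℝ) :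
    2 * (∑ i : Fin n, ∑ j : Fin n, f i j) = ∑ i : Fin n, ∑ j : Fin n, (f i j + f j i) := by
  have h : ∑ i : Fin n, ∑ j : Fin n, (f i j + f j i)
      = (∑ i : Fin n, ∑ j : Fin n, f i j) + ∑ i : Fin n, ∑ j : Fin n, f j i := by
    simp [Finset.sum_add_distrib]
  rw [h, Finset.sum_comm]; ring

private lemma double_sum_eq {n : ℕ} (f g : Fin n → Fin n → ℝ)
    (h : ∀ i j, f i j + f j i = g i j + g j i) :
    (∑ i : Fin n, ∑ j : Fin n, f i j) = ∑ i : Fin n, ∑ j : Fin n, g i j := by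
  have h1 := twice_sum' f
  have h2 := twice_sum' g
  have h3 : ∑ i : Fin n, ∑ j : Fin n, (f i j + f j i)
      = ∑ i : Fin n, ∑ j : Fin n, (g i j + g j i) :=
    Finset.sum_congr rfl fun i _ => Finset.sum_congr rfl fun j _ => h i j
  linarith

private lemma pairSum_one (n : ℕ) : pairSum n (fun _ _ => (1:ℝ)) = ((n:ℝ)^2 - n)/2 := by
  unfold pairSum
  have h := twice_sum' (fun i j : Fin n => if i < j then (1:ℝ) else 0)
  have h2 : ∀ i j : Fin n, ((if i < j then (1:ℝ) else 0) + (if j < i then (1:ℝ) else 0))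
      = if i = j then 0 else 1 := by
    intro i j
    rcases lt_trichotomy i j with hlt | heq | hgt
    · simp [hlt, asymm hlt, ne_of_lt hlt]
    · simp [heq]
    · simp [hgt, asymm hgt, (ne_of_lt hgt).symm]
  have h3 : ∑ i : Fin n, ∑ j : Fin n, (if i = j then (0:ℝ) else 1) = (n:ℝ)^2 - n := by
    have hin : ∀ i : Fin n, ∑ j : Fin n, (if i = j then (0:ℝ) else 1) = (n:ℝ) - 1 := by
      intro i
      have hpt : ∀ j : Fin n, (if i = j then (0:ℝ) else 1) = 1 - (if i = j then 1 else 0) := by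
        intro j; split <;> norm_num
      simp_rw [hpt, Finset.sum_sub_distrib, Finset.sum_ite_eq]
      simp
    simp_rw [hin]
    simp
    ring
  simp_rw [h2] at h
  rw [h3] at h
  linarith

/-- Let `G` be a connected graph on `n ≥ 5` nodes (`n` even) with a
planted bisection `(V₁, V₁ᶜ)`, `|V₁| = n/2`.  If
`((1 + c(G)) / (2ρ_avg(G) + 2c(G)(1 - 1/n))) · |E| < |E₀|`, then the metric LP
relaxation does not recover the planted bisection: there is a feasible point of
(LP-P) with objective value strictly smaller than `|E₀|`, the objective value of
the planted cut vector. -/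
theorem lp_nonrecovery_condition (n : ℕ) (hn : Even n) (hn5 : 5 ≤ n)
    (G : SimpleGraph (Fin n)) (hconn : G.Connected)
    (V1 : Finset (Fin n)) (hV1 : V1.card = n / 2)
    (hlt : (1 + cConst n G) / (2 * rhoAvg n G + 2 * cConst n G * (1 - 1 / (n : ℝ))) *
        (G.edgeSet.ncard : ℝ) < (cutCost G V1 : ℝ)) :
    (∃ x : Fin n → Fin n → ℝ, LPfeasible n x ∧ LPobj n G x < (cutCost G V1 : ℝ)) ∧
      ¬ LPrecoversOf n G (cutVecOf V1) := by
  have hn5' : (5:ℝ) ≤ (n:ℝ) := by exact_mod_cast hn5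
  have hn0 : (0:ℝ) < (n:ℝ) := by linarith
  set c := cConst n G with hcdef
  set ρ := rhoAvg n G with hrdef
  set γ := 2 * ρ + 2 * c * (1 - 1 / (n : ℝ)) with hgdef
  have hc0 : 0 ≤ c := by rw [hcdef]; exact le_max_left _ _
  have hcge : (3 * (rhoMax G : ℝ) - 4 * ρ) / (1 - 4 / (n:ℝ)) ≤ c := by
    rw [hcdef, hrdef]; exact le_max_right _ _
  set D := pairSum n (fun i j => ((G.dist i j : ℕ) : ℝ)) with hDdef
  have hD : ρ = (2 / (n : ℝ) ^ 2) * D := by rw [hrdef, hDdef]; rfl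
  -- D ≥ 1
  have hDnn : ∀ i : Fin n, (0:ℝ) ≤ ∑ j : Fin n, (if i < j then ((G.dist i j : ℕ):ℝ) else 0) := by
    intro i
    apply Finset.sum_nonneg
    intro j _
    split <;> positivity
  have hD1 : (1:ℝ) ≤ D := by
    have h0n : (0 : ℕ) < n := by omega
    have h1n : (1 : ℕ) < n := by omega
    set i0 : Fin n := ⟨0, h0n⟩
    set i1 : Fin n := ⟨1, h1n⟩
    have h01 : i0 < i1 := by simp [i0, i1, Fin.lt_def]
    have hne : i0 ≠ i1 := ne_of_lt h01
    have hdpos : 0 < G.dist i0 i1 := hconn.pos_dist_of_ne hne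
    have hd1 : (1:ℝ) ≤ ((G.dist i0 i1 : ℕ) : ℝ) := by exact_mod_cast hdpos
    have hinner : (1:ℝ) ≤ ∑ j : Fin n, (if i0 < j then ((G.dist i0 j : ℕ):ℝ) else 0) := by
      have := Finset.single_le_sum (f := fun j : Fin n => if i0 < j then ((G.dist i0 j : ℕ):ℝ) else 0)
        (fun j _ => by split <;> positivity) (Finset.mem_univ i1)
      simp only [h01, if_true] at this
      linarith
    have := Finset.single_le_sum
      (f := fun i : Fin n => ∑ j : Fin n, (if i < j then ((G.dist i j : ℕ):ℝ) else 0))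
      (fun i _ => hDnn i) (Finset.mem_univ i0)
    calc (1:ℝ) ≤ _ := hinner
      _ ≤ D := this
  have hn2 : (0:ℝ) < (n:ℝ)^2 := by positivity
  have hrpos : 0 < ρ := by
    rw [hD]
    have : (0:ℝ) < 2 / (n:ℝ)^2 := by positivity
    nlinarith
  have h1nlt : 1 / (n:ℝ) < 1 := by rw [div_lt_one hn0]; linarith
  have h4nlt : 4 / (n:ℝ) < 1 := by rw [div_lt_one hn0]; linarith
  have hg : 0 < γ := by
    rw [hgdef]
    nlinarith [mul_nonneg hc0 (le_of_lt (sub_pos.mpr h1nlt))]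
  -- perimeter bound
  have hper : 3 * (rhoMax G : ℝ) + 3 * c ≤ 2 * γ := by
    have hdiv : 3 * (rhoMax G : ℝ) - 4 * ρ ≤ c * (1 - 4 / (n:ℝ)) := by
      rw [div_le_iff₀ (sub_pos.mpr h4nlt)] at hcge
      linarith
    have hring : 4 * (c * (1 - 1/(n:ℝ))) - 3 * c = c * (1 - 4/(n:ℝ)) := by ring
    rw [hgdef]
    nlinarith
  have hdistle : ∀ i j : Fin n, ((G.dist i j : ℕ) : ℝ) ≤ (rhoMax G : ℝ) := by
    intro i j
    have : G.dist i j ≤ rhoMax G :=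
      Finset.le_sup (f := fun p : Fin n × Fin n => G.dist p.1 p.2) (Finset.mem_univ (i, j))
    exact_mod_cast this
  set x : Fin n → Fin n → ℝ := fun i j => (((G.dist i j : ℕ) : ℝ) + c) / γ with hxdef
  have hfeas : LPfeasible n x := by
    refine ⟨?_, ?_, ?_, ?_⟩
    · intro i j
      simp only [hxdef]
      rw [SimpleGraph.dist_comm]
    · intro i j k hij hik hjk
      have ht : (G.dist i j : ℝ) ≤ (G.dist i k : ℝ) + (G.dist j k : ℝ) := by
        have h1 := hconn.dist_triangle (u := i) (v := k) (w := j)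
        have h2 : G.dist k j = G.dist j k := SimpleGraph.dist_comm
        rw [h2] at h1
        exact_mod_cast h1
      simp only [hxdef]
      rw [← add_div, div_le_div_iff_of_pos_right hg]
      push_cast
      linarith
    · intro i j k h1 h2
      simp only [hxdef]
      rw [← add_div, ← add_div, div_le_iff₀ hg]
      have b1 := hdistle i j
      have b2 := hdistle i k
      have b3 := hdistle j k
      linarith
    · -- pairSum
      have key : ∀ i j : Fin n, (if i < j then x i j else 0)
          = ((if i < j then ((G.dist i j : ℕ):ℝ) else 0) + c * (if i < j then (1:ℝ) else 0)) / γ := by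
        intro i j
        by_cases h : i < j <;> simp [h, hxdef]
      have hps : pairSum n x = (D + c * (((n:ℝ)^2 - n)/2)) / γ := by
        unfold pairSum
        simp_rw [key, ← Finset.sum_div, Finset.sum_add_distrib, ← Finset.mul_sum]
        have e1 : (∑ i : Fin n, ∑ j : Fin n, if i < j then ((G.dist i j : ℕ):ℝ) else 0) = D := rfl
        have e2 : (∑ i : Fin n, ∑ j : Fin n, if i < j then (1:ℝ) else 0)
            = pairSum n (fun _ _ => (1:ℝ)) := rfl
        rw [e1, e2, pairSum_one]
      rw [hps, div_eq_iff hg.ne']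
      have hD2 : D = ρ * (n:ℝ)^2 / 2 := by
        rw [hD]; field_simp
      rw [hD2, hgdef]
      field_simp
      ring
  -- objective value of x
  have hEord : (G.edgeSet.ncard : ℝ)
      = ∑ i : Fin n, ∑ j : Fin n, (if i < j ∧ G.Adj i j then (1:ℝ) else 0) := by
    have h2E := twice_sum' (fun i j : Fin n => if i < j ∧ G.Adj i j then (1:ℝ) else 0)
    have hpt : ∀ i j : Fin n,
        ((if i < j ∧ G.Adj i j then (1:ℝ) else 0) + (if j < i ∧ G.Adj j i then (1:ℝ) else 0))
        = if G.Adj i j then (1:ℝ) else 0 := by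
      intro i j
      by_cases hA : G.Adj i j
      · have hA' : G.Adj j i := hA.symm
        rcases hA.ne.lt_or_gt with h | h
        · simp [h, hA, hA', asymm h]
        · simp [h, hA, hA', asymm h]
      · have hA' : ¬ G.Adj j i := fun h => hA h.symm
        simp [hA, hA']
    simp_rw [hpt] at h2E
    have hdeg : ∀ i : Fin n, ∑ j : Fin n, (if G.Adj i j then (1:ℝ) else 0) = (G.degree i : ℝ) := by
      intro i
      rw [Finset.sum_boole]
      congr 1
      simp [SimpleGraph.degree, SimpleGraph.neighborFinset_eq_filter]
    simp_rw [hdeg] at h2E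
    have hsd : ∑ i : Fin n, (G.degree i : ℝ) = 2 * (G.edgeFinset.card : ℝ) := by
      have := G.sum_degrees_eq_twice_card_edges
      push_cast
      exact_mod_cast this
    have hEF : (G.edgeSet.ncard : ℕ) = G.edgeFinset.card := by
      rw [SimpleGraph.edgeFinset, Set.ncard_eq_toFinset_card']
    rw [hsd] at h2E
    have : (G.edgeSet.ncard : ℝ) = (G.edgeFinset.card : ℝ) := by exact_mod_cast hEF
    linarith
  have hobjx : LPobj n G x = (1 + c) / γ * (G.edgeSet.ncard : ℝ) := by
    unfold LPobj
    have key : ∀ i j : Fin n, (if i < j ∧ G.Adj i j then x i j else 0)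
        = (1 + c) / γ * (if i < j ∧ G.Adj i j then (1:ℝ) else 0) := by
      intro i j
      by_cases h : i < j ∧ G.Adj i j
      · have hd1 : G.dist i j = 1 := SimpleGraph.dist_eq_one_iff_adj.mpr h.2
        simp [h, hxdef, hd1]
      · simp [h]
    simp_rw [key, ← Finset.mul_sum]
    rw [hEord]
  have hxlt : LPobj n G x < (cutCost G V1 : ℝ) := by
    rw [hobjx]; exact hlt
  -- objective of the cut vector equals cutCost
  have hcc : LPobj n G (cutVecOf V1) = (cutCost G V1 : ℝ) := by
    have hL : LPobj n G (cutVecOf V1)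
        = ∑ i : Fin n, ∑ j : Fin n,
            (if i < j ∧ G.Adj i j ∧ ¬(i ∈ V1 ↔ j ∈ V1) then (1:ℝ) else 0) := by
      unfold LPobj
      apply Finset.sum_congr rfl; intro i _
      apply Finset.sum_congr rfl; intro j _
      by_cases h1 : i < j <;> by_cases h2 : G.Adj i j <;> by_cases h3 : (i ∈ V1 ↔ j ∈ V1) <;>
        simp [cutVecOf, h1, h2, h3]
    have hR : (cutCost G V1 : ℝ)
        = ∑ i : Fin n, ∑ j : Fin n,
            (if G.Adj i j ∧ i ∈ V1 ∧ j ∉ V1 then (1:ℝ) else 0) := by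
      unfold cutCost
      rw [Finset.card_filter]
      push_cast
      rw [Fintype.sum_prod_type]
    rw [hL, hR]
    apply double_sum_eq
    intro i j
    by_cases hA : G.Adj i j
    · have hA' : G.Adj j i := hA.symm
      rcases hA.ne.lt_or_gt with h | h <;> by_cases hi : i ∈ V1 <;> by_cases hj : j ∈ V1 <;>
        simp [hA, hA', hi, hj, h, asymm h]
    · have hA' : ¬ G.Adj j i := fun h => hA h.symm
      simp [hA, hA']
  refine ⟨⟨x, hfeas, hxlt⟩, ?_⟩
  rintro ⟨hfb, hopt⟩
  have h1 := (hopt x hfeas).1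
  rw [hcc] at h1
  linarith
end
end

section
/- Let 0 < q < p < 1 be constants with p − q > 1/2. Then, with high probability (as n → ∞ along even n), for G drawn from the stochastic block model 𝒢_{n,p,q} the metric LP relaxation recovers the planted bisection: the cut vector of the planted bisection is the unique optimal solution of (LP-P). -/
open MeasureTheory Filter

noncomputable section
open scoped Classical ENNReal

/-- The Bernoulli measure on `Bool` with success probability `p` (a real number,
truncated to `[0,1]`). -/
def bern (p : ℝ) : MeasureTheory.Measure Bool :=
  (PMF.bernoulli (min (Real.toNNReal p) 1) (min_le_right _ _)).toMeasure

instance (p : ℝ) : MeasureTheory.IsProbabilityMeasure (bern p) :=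
  PMF.toMeasure.isProbabilityMeasure _

/-- The distribution of a random graph on `Fin n` in which, independently for every
ordered pair `(i, j)` with `i < j`, the pair is an edge with probability `pe (i, j)`:
the product of Bernoulli measures on the family of edge indicators. -/
def graphMeasure (n : ℕ) (pe : Fin n × Fin n → ℝ) :
    MeasureTheory.Measure (Fin n × Fin n → Bool) :=
  MeasureTheory.Measure.pi (fun ij => bern (pe ij))

/-- The graph on `Fin n` determined by the edge indicators `ω`: `i` and `j` are
adjacent iff the indicator of the ordered pair `(min i j, max i j)` is `true`. -/
def graphOf {n : ℕ} (ω : Fin n × Fin n → Bool) : SimpleGraph (Fin n) :=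
  SimpleGraph.fromRel (fun i j => i < j ∧ ω (i, j) = true)

/-- Edge probabilities of the Erdős–Rényi model `𝒢_{n,p}`. -/
def erPe (n : ℕ) (p : ℝ) : Fin n × Fin n → ℝ :=
  fun ij => if ij.1 < ij.2 then p else 0

/-- Edge probabilities of the stochastic block model `𝒢_{n,p,q}` with planted
bisection `V₁ = {0, …, n/2 - 1}`, `V₂ = {n/2, …, n-1}`: each pair of nodes within
`V₁` or within `V₂` is an edge with probability `p`, and each pair with one node in
`V₁` and one in `V₂` is an edge with probability `q`. -/
def sbmPe (n : ℕ) (p q : ℝ) : Fin n × Fin n → ℝ :=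
  fun ij => if ij.1 < ij.2 then (if sameSide n ij.1 ij.2 then p else q) else 0

/-- Edge probabilities of the bipartite Erdős–Rényi model `𝒢_{n,0,q}`. -/
def bipPe (n : ℕ) (q : ℝ) : Fin n × Fin n → ℝ := sbmPe n 0 q

open Finset




namespace SBM

variable {m : ℕ}

lemma sameSide_iff (i j : Fin (2 * m)) :
    sameSide (2 * m) i j ↔ ((i : ℕ) < m ↔ (j : ℕ) < m) := by
  unfold sameSide
  have : 2 * m / 2 = m := by omega
  rw [this]

lemma sameSide_comm {i j : Fin (2 * m)} :
    sameSide (2 * m) i j ↔ sameSide (2 * m) j i := by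
  rw [sameSide_iff, sameSide_iff]; tauto

/-- the side of `v` (true = first side) -/
def opp (m : ℕ) (v : Fin (2 * m)) : Finset (Fin (2 * m)) :=
  univ.filter (fun k => ¬ sameSide (2 * m) v k)

def sme (m : ℕ) (v : Fin (2 * m)) : Finset (Fin (2 * m)) :=
  univ.filter (fun k => k ≠ v ∧ sameSide (2 * m) v k)

lemma card_low : (univ.filter (fun v : Fin (2 * m) => (v : ℕ) < m)).card = m := by
  have h : (univ.filter (fun v : Fin (2 * m) => (v : ℕ) < m))
      = (univ : Finset (Fin m)).image (fun k : Fin m => (Fin.castLE (by omega) k : Fin (2 * m))) := by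
    ext v
    simp only [mem_filter, mem_univ, true_and, mem_image]
    constructor
    · intro hv; exact ⟨⟨v, hv⟩, by simp [Fin.ext_iff]⟩
    · rintro ⟨k, rfl⟩; simpa using k.isLt
  rw [h, Finset.card_image_of_injective _ (fun a b hab => by
    simpa [Fin.ext_iff] using hab)]
  simp

lemma card_high : (univ.filter (fun v : Fin (2 * m) => ¬ (v : ℕ) < m)).card = m := by
  have := Finset.card_filter_add_card_filter_not
    (s := (univ : Finset (Fin (2 * m)))) (p := fun v : Fin (2 * m) => (v : ℕ) < m)
  have h2 : (univ : Finset (Fin (2 * m))).card = 2 * m := by simp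
  have h3 := @card_low m
  omega

lemma card_opp (v : Fin (2 * m)) : (opp m v).card = m := by
  unfold opp
  by_cases hv : (v : ℕ) < m
  · rw [show (univ.filter (fun k => ¬ sameSide (2 * m) v k))
        = univ.filter (fun k : Fin (2 * m) => ¬ (k : ℕ) < m) from ?_]
    · exact card_high
    · apply Finset.filter_congr; intro k _
      simp only [sameSide_iff]; tauto
  · rw [show (univ.filter (fun k => ¬ sameSide (2 * m) v k))
        = univ.filter (fun k : Fin (2 * m) => (k : ℕ) < m) from ?_]
    · exact card_low
    · apply Finset.filter_congr; intro k _
      simp only [sameSide_iff]; tauto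

lemma mem_opp {v k : Fin (2 * m)} : k ∈ opp m v ↔ ¬ sameSide (2 * m) v k := by
  simp [opp]

lemma mem_sme {v k : Fin (2 * m)} : k ∈ sme m v ↔ k ≠ v ∧ sameSide (2 * m) v k := by
  simp [sme]

lemma ne_of_mem_opp {v k : Fin (2 * m)} (h : k ∈ opp m v) : k ≠ v := by
  rw [mem_opp] at h
  intro he; subst he; exact h Iff.rfl

lemma card_sme (v : Fin (2 * m)) : (sme m v).card = m - 1 := by
  have h1 : insert v (sme m v) = univ.filter (fun k => sameSide (2 * m) v k) := by
    ext k
    simp only [mem_insert, mem_sme, mem_filter, mem_univ, true_and]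
    constructor
    · rintro (rfl | ⟨-, h⟩); · exact Iff.rfl
      · exact h
    · intro h
      rcases eq_or_ne k v with rfl | hne
      · exact Or.inl rfl
      · exact Or.inr ⟨hne, h⟩
  have hv : v ∉ sme m v := by simp [mem_sme]
  have h2 : (univ.filter (fun k => sameSide (2 * m) v k)).card = m := by
    by_cases hvm : (v : ℕ) < m
    · rw [show (univ.filter (fun k => sameSide (2 * m) v k))
          = univ.filter (fun k : Fin (2 * m) => (k : ℕ) < m) from ?_]
      · exact card_low
      · apply Finset.filter_congr; intro k _; simp only [sameSide_iff]; tauto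
    · rw [show (univ.filter (fun k => sameSide (2 * m) v k))
          = univ.filter (fun k : Fin (2 * m) => ¬ (k : ℕ) < m) from ?_]
      · exact card_high
      · apply Finset.filter_congr; intro k _; simp only [sameSide_iff]; tauto
  have := Finset.card_insert_of_notMem hv
  rw [h1, h2] at this
  omega

lemma opp_eq_of_sameSide {i j : Fin (2 * m)} (h : sameSide (2 * m) i j) :
    opp m i = opp m j := by
  ext k
  rw [sameSide_iff] at h
  simp only [mem_opp, sameSide_iff]
  tauto

lemma opp_eq_insert_sme {i k : Fin (2 * m)} (h : ¬ sameSide (2 * m) i k) :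
    opp m k = insert i (sme m i) := by
  ext j
  rw [sameSide_iff] at h
  simp only [mem_opp, mem_insert, mem_sme, sameSide_iff]
  constructor
  · intro hj
    rcases eq_or_ne j i with rfl | hne
    · exact Or.inl rfl
    · refine Or.inr ⟨hne, ?_⟩; tauto
  · rintro (rfl | ⟨hne, hs⟩) <;> tauto

end SBM

namespace SBM

variable {m : ℕ}

section Det

variable (m) in
/-- cross-neighbours of `v` -/
def Dset (G : SimpleGraph (Fin (2 * m))) (v : Fin (2 * m)) : Finset (Fin (2 * m)) :=
  (opp m v).filter (fun k => G.Adj v k)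

variable (m) in
/-- same-side non-neighbours of `v` -/
def Nset (G : SimpleGraph (Fin (2 * m))) (v : Fin (2 * m)) : Finset (Fin (2 * m)) :=
  (sme m v).filter (fun j => ¬ G.Adj v j)

variable (m) in
def Zv (x : Fin (2 * m) → Fin (2 * m) → ℝ) (v : Fin (2 * m)) : ℝ :=
  ∑ k ∈ opp m v, (1 - x v k)

variable (m) in
def Yv (x : Fin (2 * m) → Fin (2 * m) → ℝ) (v : Fin (2 * m)) : ℝ :=
  ∑ j ∈ sme m v, x v j

variable (m) in
def T2 (x : Fin (2 * m) → Fin (2 * m) → ℝ) : ℝ := ∑ v, Yv m x v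

variable (m) in
def OE (G : SimpleGraph (Fin (2 * m))) (x : Fin (2 * m) → Fin (2 * m) → ℝ) : ℝ :=
  ∑ i, ∑ j, if G.Adj i j then x i j else 0

variable {x : Fin (2 * m) → Fin (2 * m) → ℝ}
  (hsym : ∀ i j, x i j = x j i)
  (htri : ∀ i j k : Fin (2 * m), i ≠ j → i ≠ k → j ≠ k → x i j ≤ x i k + x j k)
  (hperi : ∀ i j k : Fin (2 * m), i < j → j < k → x i j + x i k + x j k ≤ 2)

section
include hsym htri

lemma x_nonneg (hm : 2 ≤ m) {i j : Fin (2 * m)} (hij : i ≠ j) : 0 ≤ x i j := by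
  -- find a third vertex
  have hcard : ({i, j} : Finset (Fin (2 * m))).card < (univ : Finset (Fin (2 * m))).card := by
    calc ({i, j} : Finset (Fin (2 * m))).card ≤ 2 := Finset.card_insert_le _ _ |>.trans (by simp)
    _ < (univ : Finset (Fin (2 * m))).card := by simp; omega
  have hne : ({i, j} : Finset (Fin (2 * m))) ≠ univ := fun h => by
    rw [h] at hcard; exact lt_irrefl _ hcard
  obtain ⟨k, -, hk⟩ := Finset.exists_of_ssubset (Finset.ssubset_univ_iff.mpr hne)
  simp only [Finset.mem_insert, Finset.mem_singleton, not_or] at hk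
  obtain ⟨hki, hkj⟩ : k ≠ i ∧ k ≠ j := hk
  have h1 : x k i ≤ x k j + x i j := htri k i j hki hkj hij
  have h2 : x k j ≤ x k i + x j i := htri k j i hkj hki (Ne.symm hij)
  have := hsym i j
  linarith

end

section
include hsym hperi

lemma perim3 {i j k : Fin (2 * m)} (hij : i ≠ j) (hik : i ≠ k) (hjk : j ≠ k) :
    x i j + x i k + x j k ≤ 2 := by
  have e1 := hsym i j; have e2 := hsym i k; have e3 := hsym j k
  rcases lt_trichotomy i j with h1 | h1 | h1
  · rcases lt_trichotomy j k with h2 | h2 | h2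
    · exact hperi i j k h1 h2
    · exact absurd h2 hjk
    · rcases lt_trichotomy i k with h3 | h3 | h3
      · have := hperi i k j h3 h2; linarith
      · exact absurd h3 hik
      · have := hperi k i j h3 h1; linarith
  · exact absurd h1 hij
  · rcases lt_trichotomy i k with h2 | h2 | h2
    · have := hperi j i k h1 h2; linarith
    · exact absurd h2 hik
    · rcases lt_trichotomy j k with h3 | h3 | h3
      · have := hperi j k i h3 h2; linarith
      · exact absurd h3 hjk
      · have := hperi k j i h3 h1; linarith

end

section
include hsym htri hperi

lemma Z_nonneg (hm : 2 ≤ m) (v : Fin (2 * m)) : 0 ≤ Zv m x v := by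
  set g : Fin (2 * m) → ℝ := fun k => 1 - x v k with hg
  have pair : ∀ k ∈ opp m v, ∀ k' ∈ (opp m v).erase k, 0 ≤ g k + g k' := by
    intro k hk k' hk'
    have hkk' : k' ≠ k := Finset.ne_of_mem_erase hk'
    have hk'o : k' ∈ opp m v := Finset.mem_of_mem_erase hk'
    have h1 : k ≠ v := ne_of_mem_opp hk
    have h2 : k' ≠ v := ne_of_mem_opp hk'o
    have hx1 : 0 ≤ x k k' := x_nonneg hsym htri hm (Ne.symm hkk')
    have hp : x v k + x v k' + x k k' ≤ 2 :=
      perim3 hsym hperi (Ne.symm h1) (Ne.symm h2) (Ne.symm hkk')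
    simp only [hg]; linarith
  have h1 : (0:ℝ) ≤ ∑ k ∈ opp m v, ∑ k' ∈ (opp m v).erase k, (g k + g k') :=
    Finset.sum_nonneg fun k hk => Finset.sum_nonneg fun k' hk' => pair k hk k' hk'
  have h2 : ∑ k ∈ opp m v, ∑ k' ∈ (opp m v).erase k, (g k + g k')
      = (2 * (m:ℝ) - 2) * Zv m x v := by
    have : ∀ k ∈ opp m v, ∑ k' ∈ (opp m v).erase k, (g k + g k')
        = ((m:ℝ) - 1) * g k + (Zv m x v - g k) := by
      intro k hk
      rw [Finset.sum_add_distrib, Finset.sum_const, Finset.card_erase_of_mem hk, card_opp,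
        Finset.sum_erase_eq_sub hk]
      have hm1 : (1:ℕ) ≤ m := by omega
      have : ((m - 1 : ℕ) : ℝ) = (m:ℝ) - 1 := by
        push_cast [Nat.cast_sub hm1]; ring
      rw [nsmul_eq_mul, this]
      rfl
    rw [Finset.sum_congr rfl this, Finset.sum_add_distrib, Finset.sum_sub_distrib,
      ← Finset.mul_sum, Finset.sum_const, card_opp]
    have : ∑ k ∈ opp m v, g k = Zv m x v := rfl
    rw [this, nsmul_eq_mul]
    ring
  rw [h2] at h1
  have hc : (0:ℝ) < 2 * (m:ℝ) - 2 := by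
    have : (2:ℝ) ≤ (m:ℝ) := by exact_mod_cast hm
    linarith
  nlinarith

end

include hsym htri in
lemma Y_nonneg (hm : 2 ≤ m) (v : Fin (2 * m)) : 0 ≤ Yv m x v :=
  Finset.sum_nonneg fun j hj => x_nonneg hsym htri hm (Ne.symm (mem_sme.mp hj).1)

include hsym htri in
lemma T2_nonneg (hm : 2 ≤ m) : 0 ≤ T2 m x :=
  Finset.sum_nonneg fun v _ => Y_nonneg hsym htri hm v

end Det

end SBM

namespace SBM

variable {m : ℕ}

section Det2

variable {G : SimpleGraph (Fin (2 * m))}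
variable {x : Fin (2 * m) → Fin (2 * m) → ℝ}
  (hsym : ∀ i j, x i j = x j i)
  (htri : ∀ i j k : Fin (2 * m), i ≠ j → i ≠ k → j ≠ k → x i j ≤ x i k + x j k)
  (hperi : ∀ i j k : Fin (2 * m), i < j → j < k → x i j + x i k + x j k ≤ 2)

/-- split a sum over `univ.erase v` into same-side and cross parts -/
lemma erase_split (v : Fin (2 * m)) (f : Fin (2 * m) → ℝ) :
    ∑ j ∈ univ.erase v, f j = ∑ j ∈ sme m v, f j + ∑ j ∈ opp m v, f j := by
  rw [← Finset.sum_filter_add_sum_filter_not (univ.erase v) (fun j => sameSide (2 * m) v j) f]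
  congr 1
  · apply Finset.sum_congr _ (fun _ _ => rfl)
    ext j
    rw [Finset.mem_filter, Finset.mem_erase, mem_sme]
    constructor
    · rintro ⟨⟨hne, -⟩, hs⟩; exact ⟨hne, hs⟩
    · rintro ⟨hne, hs⟩; exact ⟨⟨hne, Finset.mem_univ _⟩, hs⟩
  · apply Finset.sum_congr _ (fun _ _ => rfl)
    ext j
    rw [Finset.mem_filter, Finset.mem_erase, mem_opp]
    constructor
    · rintro ⟨-, hs⟩; exact hs
    · intro hs
      exact ⟨⟨fun he => hs (he ▸ Iff.rfl), Finset.mem_univ _⟩, hs⟩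

include hsym in
lemma twice_pairSum : 2 * pairSum (2 * m) x = ∑ v, ∑ j ∈ univ.erase v, x v j := by
  have hpt : ∀ i j : Fin (2 * m),
      (if i < j then x i j else 0) + (if j < i then x i j else 0)
        = if j ∈ univ.erase i then x i j else 0 := by
    intro i j
    rcases lt_trichotomy i j with h | h | h
    · simp [h, not_lt_of_gt h, Finset.mem_erase, (ne_of_lt h).symm]
    · subst h; simp [lt_irrefl]
    · simp [h, not_lt_of_gt h, (ne_of_lt h), Finset.mem_erase]
  have hB : (∑ i, ∑ j, if j < i then x i j else 0) = pairSum (2 * m) x := by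
    rw [Finset.sum_comm]
    unfold pairSum
    apply Finset.sum_congr rfl; intro j _
    apply Finset.sum_congr rfl; intro i _
    rcases lt_trichotomy j i with h | h | h <;> simp [h, hsym i j, lt_asymm, lt_irrefl]
  calc 2 * pairSum (2 * m) x
      = pairSum (2 * m) x + (∑ i, ∑ j, if j < i then x i j else 0) := by rw [hB]; ring
    _ = ∑ i, ∑ j, ((if i < j then x i j else 0) + (if j < i then x i j else 0)) := by
        unfold pairSum; rw [← Finset.sum_add_distrib]
        apply Finset.sum_congr rfl; intro i _; rw [← Finset.sum_add_distrib]
    _ = ∑ i, ∑ j, (if j ∈ univ.erase i then x i j else 0) := by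
        apply Finset.sum_congr rfl; intro i _
        apply Finset.sum_congr rfl; intro j _
        exact hpt i j
    _ = ∑ v, ∑ j ∈ univ.erase v, x v j := by
        apply Finset.sum_congr rfl; intro i _
        rw [Finset.sum_ite_mem, Finset.univ_inter]

include hsym in
lemma sumZ_eq (hsum : pairSum (2 * m) x = ((2 * m : ℕ) : ℝ) ^ 2 / 4) :
    ∑ v, Zv m x v = T2 m x := by
  have h1 : ∑ v, ∑ j ∈ univ.erase v, x v j = T2 m x + ∑ v, ((m : ℝ) - Zv m x v) := by
    unfold T2
    rw [← Finset.sum_add_distrib]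
    apply Finset.sum_congr rfl; intro v _
    rw [erase_split v (x v)]
    congr 1
    have : ∑ j ∈ opp m v, x v j = ∑ j ∈ opp m v, ((1 : ℝ) - (1 - x v j)) := by
      apply Finset.sum_congr rfl; intro j _; ring
    rw [this, Finset.sum_sub_distrib, Finset.sum_const, card_opp]
    unfold Zv; simp
  have h2 : pairSum (2 * m) x = (m : ℝ) ^ 2 := by
    rw [hsum]; push_cast; ring
  have h3 := twice_pairSum (x := x) hsym
  rw [h2, h1] at h3
  rw [Finset.sum_sub_distrib, Finset.sum_const] at h3
  simp only [Finset.card_univ, Fintype.card_fin, nsmul_eq_mul] at h3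
  push_cast at h3 ⊢
  linarith

include hsym hperi htri in
lemma same_bound (hm : 2 ≤ m) {i j : Fin (2 * m)} (hij : i ≠ j)
    (hss : sameSide (2 * m) i j) : (m : ℝ) * x i j ≤ Zv m x i + Zv m x j := by
  have hstep : ∀ k ∈ opp m i, x i j ≤ (1 - x i k) + (1 - x j k) := by
    intro k hk
    have hki : k ≠ i := ne_of_mem_opp hk
    have hko : ¬ sameSide (2 * m) i k := mem_opp.mp hk
    have hkj : k ≠ j := by
      intro he; subst he
      rw [sameSide_iff] at hss hko; tauto
    have := perim3 hsym hperi hij (Ne.symm hki) (Ne.symm hkj)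
    linarith
  have h1 : ∑ k ∈ opp m i, x i j ≤ ∑ k ∈ opp m i, ((1 - x i k) + (1 - x j k)) :=
    Finset.sum_le_sum hstep
  rw [Finset.sum_const, card_opp, nsmul_eq_mul] at h1
  rw [Finset.sum_add_distrib] at h1
  have h2 : ∑ k ∈ opp m i, (1 - x j k) = Zv m x j := by
    unfold Zv; rw [opp_eq_of_sameSide hss]
  have h3 : ∑ k ∈ opp m i, (1 - x i k) = Zv m x i := rfl
  rw [h2, h3] at h1
  exact h1

include hsym htri in
lemma cross_bound (hm : 2 ≤ m) {i k : Fin (2 * m)} (hik : ¬ sameSide (2 * m) i k) :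
    (m : ℝ) * (1 - x i k) ≤ Yv m x i + Zv m x k := by
  have hikne : i ≠ k := by intro he; subst he; exact hik Iff.rfl
  have hstep : ∀ j ∈ sme m i, (1 - x i k) ≤ x i j + (1 - x j k) := by
    intro j hj
    obtain ⟨hji, hjs⟩ := mem_sme.mp hj
    have hjk : j ≠ k := by
      intro he; subst he
      rw [sameSide_iff] at hjs hik; tauto
    have h := htri j k i hjk hji (Ne.symm hikne)
    have h2 := hsym j i
    have h3 := hsym k i
    linarith
  have h1 : ∑ j ∈ sme m i, (1 - x i k) ≤ ∑ j ∈ sme m i, (x i j + (1 - x j k)) :=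
    Finset.sum_le_sum hstep
  rw [Finset.sum_const, card_sme, nsmul_eq_mul, Finset.sum_add_distrib] at h1
  have h2 : ∑ j ∈ sme m i, (1 - x j k) = Zv m x k - (1 - x i k) := by
    have ho : opp m k = insert i (sme m i) := opp_eq_insert_sme hik
    have hni : i ∉ sme m i := by simp [mem_sme]
    have : Zv m x k = (1 - x k i) + ∑ j ∈ sme m i, (1 - x k j) := by
      unfold Zv; rw [ho, Finset.sum_insert hni]
    have hc : ∑ j ∈ sme m i, (1 - x k j) = ∑ j ∈ sme m i, (1 - x j k) :=
      Finset.sum_congr rfl (fun j _ => by rw [hsym k j])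
    rw [hc] at this
    rw [this, hsym i k]; ring
  rw [h2] at h1
  have hm1 : ((m - 1 : ℕ) : ℝ) = (m : ℝ) - 1 := by
    have : (1:ℕ) ≤ m := by omega
    push_cast [Nat.cast_sub this]; ring
  rw [hm1] at h1
  unfold Yv
  linarith

end Det2

end SBM

namespace SBM

variable {m : ℕ}

section Det3

variable {G : SimpleGraph (Fin (2 * m))}
variable {x : Fin (2 * m) → Fin (2 * m) → ℝ}

lemma OE_eq (hsym : ∀ i j, x i j = x j i) :
    OE m G x = 2 * LPobj (2 * m) G x := by
  have hpt : ∀ i j : Fin (2 * m),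
      (if i < j ∧ G.Adj i j then x i j else 0) + (if j < i ∧ G.Adj i j then x i j else 0)
        = if G.Adj i j then x i j else 0 := by
    intro i j
    rcases lt_trichotomy i j with h | h | h
    · simp [h, not_lt_of_gt h]
    · subst h; simp
    · simp [h, not_lt_of_gt h]
  have hB : (∑ i, ∑ j, if j < i ∧ G.Adj i j then x i j else 0) = LPobj (2 * m) G x := by
    rw [Finset.sum_comm]
    unfold LPobj
    apply Finset.sum_congr rfl; intro j _
    apply Finset.sum_congr rfl; intro i _
    by_cases h : j < i ∧ G.Adj i j
    · rw [if_pos h, if_pos ⟨h.1, (G.adj_comm i j).mp h.2⟩, hsym i j]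
    · rw [if_neg h, if_neg (fun h' => h ⟨h'.1, (G.adj_comm j i).mp h'.2⟩)]
  calc OE m G x = ∑ i, ∑ j, ((if i < j ∧ G.Adj i j then x i j else 0)
        + (if j < i ∧ G.Adj i j then x i j else 0)) := by
        unfold OE
        apply Finset.sum_congr rfl; intro i _
        apply Finset.sum_congr rfl; intro j _
        exact (hpt i j).symm
    _ = LPobj (2 * m) G x + (∑ i, ∑ j, if j < i ∧ G.Adj i j then x i j else 0) := by
        unfold LPobj
        rw [← Finset.sum_add_distrib]
        apply Finset.sum_congr rfl; intro i _
        rw [← Finset.sum_add_distrib]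
    _ = 2 * LPobj (2 * m) G x := by rw [hB]; ring

variable (m G) in
def SA (i : Fin (2 * m)) : Finset (Fin (2 * m)) :=
  (sme m i).filter (fun j => G.Adj i j)

lemma adj_row_split (i : Fin (2 * m)) (f : Fin (2 * m) → ℝ) :
    (∑ j, if G.Adj i j then f j else 0)
      = ∑ j ∈ SA m G i, f j + ∑ k ∈ Dset m G i, f k := by
  have h0 : (∑ j, if G.Adj i j then f j else 0)
      = ∑ j ∈ univ.filter (fun j => G.Adj i j), f j := (Finset.sum_filter _ _).symm
  have h1 : (univ.filter (fun j => G.Adj i j)) = (univ.erase i).filter (fun j => G.Adj i j) := by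
    ext j
    simp only [Finset.mem_filter, Finset.mem_erase, Finset.mem_univ, true_and, and_true]
    exact ⟨fun h => ⟨fun he => G.irrefl (he ▸ h), h⟩, fun h => h.2⟩
  rw [h0, h1, Finset.sum_filter, erase_split i (fun j => if G.Adj i j then f j else 0),
    ← Finset.sum_filter, ← Finset.sum_filter]
  rfl

lemma Nset_symm {i j : Fin (2 * m)} : j ∈ Nset m G i ↔ i ∈ Nset m G j := by
  unfold Nset
  simp only [Finset.mem_filter, mem_sme]
  constructor
  · rintro ⟨⟨hne, hs⟩, ha⟩
    exact ⟨⟨Ne.symm hne, sameSide_comm.mp hs⟩, fun h => ha ((G.adj_comm j i).mp h)⟩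
  · rintro ⟨⟨hne, hs⟩, ha⟩
    exact ⟨⟨Ne.symm hne, sameSide_comm.mp hs⟩, fun h => ha ((G.adj_comm i j).mp h)⟩

lemma Dset_symm {i j : Fin (2 * m)} : j ∈ Dset m G i ↔ i ∈ Dset m G j := by
  unfold Dset
  simp only [Finset.mem_filter, mem_opp]
  constructor
  · rintro ⟨hs, ha⟩
    exact ⟨fun h => hs (sameSide_comm.mp h), (G.adj_comm i j).mp ha⟩
  · rintro ⟨hs, ha⟩
    exact ⟨fun h => hs (sameSide_comm.mp h), (G.adj_comm j i).mp ha⟩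

lemma swap_sum (N : Fin (2 * m) → Finset (Fin (2 * m)))
    (hN : ∀ i j, j ∈ N i ↔ i ∈ N j) (g : Fin (2 * m) → ℝ) :
    (∑ i, ∑ j ∈ N i, g j) = ∑ j, ((N j).card : ℝ) * g j := by
  rw [Finset.sum_comm' (s' := N) (t' := univ)]
  · apply Finset.sum_congr rfl; intro j _
    rw [Finset.sum_const, nsmul_eq_mul]
  · intro i j
    simp only [Finset.mem_univ, true_and, and_true]
    exact hN i j

section

variable (hsym : ∀ i j, x i j = x j i)
  (htri : ∀ i j k : Fin (2 * m), i ≠ j → i ≠ k → j ≠ k → x i j ≤ x i k + x j k)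
  (hperi : ∀ i j k : Fin (2 * m), i < j → j < k → x i j + x i k + x j k ≤ 2)
  (hsum : pairSum (2 * m) x = ((2 * m : ℕ) : ℝ) ^ 2 / 4)

include hsym htri hperi hsum in
lemma D2_ge (hm : 2 ≤ m) (α β : ℝ) (hα : 0 ≤ α) (hβ : 0 ≤ β)
    (Hdeg : ∀ v, ((Dset m G v).card : ℝ) ≤ α * m)
    (Hnon : ∀ v, ((Nset m G v).card : ℝ) ≤ β * m) :
    (1 - 2 * α - 2 * β) * T2 m x ≤ OE m G x - OE m G (cutVec (2 * m)) := by
  have hm0 : (0:ℝ) < m := by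
    have : 0 < m := by omega
    exact_mod_cast this
  have hZsum : ∑ v, Zv m x v = T2 m x := sumZ_eq hsym hsum
  set SNon : ℝ := ∑ i, ∑ j ∈ Nset m G i, x i j with hSNon
  set CAdj : ℝ := ∑ i, ∑ k ∈ Dset m G i, (1 - x i k) with hCAdj
  set DC : ℝ := ∑ i, ((Dset m G i).card : ℝ) with hDC
  -- row decompositions
  have hrow : ∀ i : Fin (2 * m), (∑ j, if G.Adj i j then x i j else 0)
      = Yv m x i - (∑ j ∈ Nset m G i, x i j)
        + (((Dset m G i).card : ℝ) - ∑ k ∈ Dset m G i, (1 - x i k)) := by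
    intro i
    rw [adj_row_split]
    have h1 : Yv m x i = ∑ j ∈ SA m G i, x i j + ∑ j ∈ Nset m G i, x i j := by
      unfold Yv
      rw [← Finset.sum_filter_add_sum_filter_not (sme m i) (fun j => G.Adj i j)]
      rfl
    have h2 : ∑ k ∈ Dset m G i, x i k
        = ((Dset m G i).card : ℝ) - ∑ k ∈ Dset m G i, (1 - x i k) := by
      rw [Finset.sum_sub_distrib, Finset.sum_const, nsmul_eq_mul, mul_one]
      ring
    linarith [h1, h2]
  have hOEx : OE m G x = T2 m x - SNon + (DC - CAdj) := by
    unfold OE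
    rw [Finset.sum_congr rfl (fun i _ => hrow i)]
    rw [Finset.sum_add_distrib, Finset.sum_sub_distrib, Finset.sum_sub_distrib]
    rfl
  have hOEb : OE m G (cutVec (2 * m)) = DC := by
    unfold OE
    apply Finset.sum_congr rfl
    intro i _
    rw [adj_row_split]
    have h1 : ∑ j ∈ SA m G i, cutVec (2 * m) i j = 0 := by
      apply Finset.sum_eq_zero
      intro j hj
      have hs : sameSide (2 * m) i j := (mem_sme.mp (Finset.mem_filter.mp hj).1).2
      simp [cutVec, hs]
    have h2 : ∑ k ∈ Dset m G i, cutVec (2 * m) i k = ((Dset m G i).card : ℝ) := by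
      have he : ∀ k ∈ Dset m G i, cutVec (2 * m) i k = 1 := by
        intro k hk
        have hs : ¬ sameSide (2 * m) i k := mem_opp.mp (Finset.mem_filter.mp hk).1
        simp [cutVec, hs]
      rw [Finset.sum_congr rfl he, Finset.sum_const, nsmul_eq_mul, mul_one]
    rw [h1, h2, zero_add]
  -- bound on SNon
  have hSN : (m : ℝ) * SNon ≤ 2 * (β * m) * T2 m x := by
    have step1 : (m : ℝ) * SNon = ∑ i, ∑ j ∈ Nset m G i, (m : ℝ) * x i j := by
      rw [hSNon, Finset.mul_sum]
      exact Finset.sum_congr rfl (fun i _ => Finset.mul_sum _ _ _)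
    have step2 : (∑ i, ∑ j ∈ Nset m G i, (m : ℝ) * x i j)
        ≤ ∑ i, ∑ j ∈ Nset m G i, (Zv m x i + Zv m x j) := by
      apply Finset.sum_le_sum
      intro i _
      apply Finset.sum_le_sum
      intro j hj
      obtain ⟨hjs, -⟩ := Finset.mem_filter.mp hj
      obtain ⟨hne, hs⟩ := mem_sme.mp hjs
      exact same_bound hsym htri hperi hm (Ne.symm hne) hs
    have step3 : (∑ i, ∑ j ∈ Nset m G i, (Zv m x i + Zv m x j))
        = ∑ i, ((Nset m G i).card : ℝ) * Zv m x i
          + ∑ j, ((Nset m G j).card : ℝ) * Zv m x j := by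
      have : ∀ i : Fin (2 * m), ∑ j ∈ Nset m G i, (Zv m x i + Zv m x j)
          = ((Nset m G i).card : ℝ) * Zv m x i + ∑ j ∈ Nset m G i, Zv m x j := by
        intro i
        rw [Finset.sum_add_distrib, Finset.sum_const, nsmul_eq_mul]
      rw [Finset.sum_congr rfl (fun i _ => this i), Finset.sum_add_distrib,
        swap_sum (Nset m G) (fun i j => Nset_symm) (Zv m x)]
    have step4 : (∑ i, ((Nset m G i).card : ℝ) * Zv m x i) ≤ (β * m) * T2 m x := by
      rw [← hZsum, Finset.mul_sum]
      apply Finset.sum_le_sum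
      intro i _
      exact mul_le_mul_of_nonneg_right (Hnon i) (Z_nonneg hsym htri hperi hm i)
    linarith [step1, step2, step3, step4]
  -- bound on CAdj
  have hCA : (m : ℝ) * CAdj ≤ 2 * (α * m) * T2 m x := by
    have step1 : (m : ℝ) * CAdj = ∑ i, ∑ k ∈ Dset m G i, (m : ℝ) * (1 - x i k) := by
      rw [hCAdj, Finset.mul_sum]
      exact Finset.sum_congr rfl (fun i _ => Finset.mul_sum _ _ _)
    have step2 : (∑ i, ∑ k ∈ Dset m G i, (m : ℝ) * (1 - x i k))
        ≤ ∑ i, ∑ k ∈ Dset m G i, (Yv m x i + Zv m x k) := by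
      apply Finset.sum_le_sum
      intro i _
      apply Finset.sum_le_sum
      intro k hk
      have hs : ¬ sameSide (2 * m) i k := mem_opp.mp (Finset.mem_filter.mp hk).1
      exact cross_bound hsym htri hm hs
    have step3 : (∑ i, ∑ k ∈ Dset m G i, (Yv m x i + Zv m x k))
        = ∑ i, ((Dset m G i).card : ℝ) * Yv m x i
          + ∑ k, ((Dset m G k).card : ℝ) * Zv m x k := by
      have : ∀ i : Fin (2 * m), ∑ k ∈ Dset m G i, (Yv m x i + Zv m x k)
          = ((Dset m G i).card : ℝ) * Yv m x i + ∑ k ∈ Dset m G i, Zv m x k := by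
        intro i
        rw [Finset.sum_add_distrib, Finset.sum_const, nsmul_eq_mul]
      rw [Finset.sum_congr rfl (fun i _ => this i), Finset.sum_add_distrib,
        swap_sum (Dset m G) (fun i j => Dset_symm) (Zv m x)]
    have step4 : (∑ i, ((Dset m G i).card : ℝ) * Yv m x i) ≤ (α * m) * T2 m x := by
      unfold T2
      rw [Finset.mul_sum]
      apply Finset.sum_le_sum
      intro i _
      exact mul_le_mul_of_nonneg_right (Hdeg i) (Y_nonneg hsym htri hm i)
    have step5 : (∑ k, ((Dset m G k).card : ℝ) * Zv m x k) ≤ (α * m) * T2 m x := by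
      rw [← hZsum, Finset.mul_sum]
      apply Finset.sum_le_sum
      intro k _
      exact mul_le_mul_of_nonneg_right (Hdeg k) (Z_nonneg hsym htri hperi hm k)
    linarith [step1, step2, step3, step4, step5]
  have hSN' : SNon ≤ 2 * β * T2 m x := by
    have h := hSN
    have : (m : ℝ) * SNon ≤ (m : ℝ) * (2 * β * T2 m x) := by linarith [hSN]
    exact le_of_mul_le_mul_left (by linarith [this]) hm0
  have hCA' : CAdj ≤ 2 * α * T2 m x := by
    have : (m : ℝ) * CAdj ≤ (m : ℝ) * (2 * α * T2 m x) := by linarith [hCA]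
    exact le_of_mul_le_mul_left (by linarith [this]) hm0
  have : OE m G x - OE m G (cutVec (2 * m)) = T2 m x - SNon - CAdj := by
    rw [hOEx, hOEb]; ring
  rw [this]
  linarith [hSN', hCA']

end

end Det3

end SBM

namespace SBM

variable {m : ℕ}

section Det4

variable {G : SimpleGraph (Fin (2 * m))}
variable {x : Fin (2 * m) → Fin (2 * m) → ℝ}
  (hsym : ∀ i j, x i j = x j i)
  (htri : ∀ i j k : Fin (2 * m), i ≠ j → i ≠ k → j ≠ k → x i j ≤ x i k + x j k)
  (hperi : ∀ i j k : Fin (2 * m), i < j → j < k → x i j + x i k + x j k ≤ 2)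
  (hsum : pairSum (2 * m) x = ((2 * m : ℕ) : ℝ) ^ 2 / 4)

include hsym htri hperi hsum in
lemma rigid (hm : 2 ≤ m) (hT : T2 m x = 0) :
    ∀ i j : Fin (2 * m), i ≠ j → x i j = cutVec (2 * m) i j := by
  have hm0 : (0:ℝ) < m := by
    have : 0 < m := by omega
    exact_mod_cast this
  have hZsum : ∑ v, Zv m x v = T2 m x := sumZ_eq hsym hsum
  have hYzero : ∀ v, Yv m x v = 0 := by
    intro v
    have := (Finset.sum_eq_zero_iff_of_nonneg
      (fun v _ => Y_nonneg hsym htri hm v)).mp hT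
    exact this v (Finset.mem_univ v)
  have hsame : ∀ i j, j ∈ sme m i → x i j = 0 := by
    intro i j hj
    have := (Finset.sum_eq_zero_iff_of_nonneg
      (fun j hj => x_nonneg hsym htri hm (Ne.symm (mem_sme.mp hj).1))).mp (hYzero i)
    exact this j hj
  have hZzero : ∀ v, Zv m x v = 0 := by
    intro v
    have h0 : ∑ v, Zv m x v = 0 := by rw [hZsum, hT]
    have := (Finset.sum_eq_zero_iff_of_nonneg
      (fun v _ => Z_nonneg hsym htri hperi hm v)).mp h0
    exact this v (Finset.mem_univ v)
  have hcross_le : ∀ i k : Fin (2 * m), ¬ sameSide (2 * m) i k → 1 - x i k ≤ 0 := by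
    intro i k hik
    have h := cross_bound hsym htri hm hik
    have hY := hYzero i
    have hZ := hZzero k
    nlinarith
  have hcross : ∀ i k : Fin (2 * m), ¬ sameSide (2 * m) i k → x i k = 1 := by
    intro i k hik
    have hmem : k ∈ opp m i := mem_opp.mpr hik
    have h0 : Zv m x i = 0 := hZzero i
    have := (Finset.sum_eq_zero_iff_of_nonpos
      (fun k' hk' => hcross_le i k' (mem_opp.mp hk'))).mp h0
    have := this k hmem
    linarith
  intro i j hij
  by_cases hs : sameSide (2 * m) i j
  · rw [show cutVec (2 * m) i j = 0 from if_pos hs]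
    exact hsame i j (mem_sme.mpr ⟨Ne.symm hij, hs⟩)
  · rw [show cutVec (2 * m) i j = 1 from if_neg hs]
    exact hcross i j hs

end Det4

lemma cutVec_feasible : LPfeasible (2 * m) (cutVec (2 * m)) := by
  refine ⟨?_, ?_, ?_, ?_⟩
  · intro i j
    unfold cutVec
    by_cases h : sameSide (2 * m) i j
    · rw [if_pos h, if_pos (sameSide_comm.mp h)]
    · rw [if_neg h, if_neg (fun h' => h (sameSide_comm.mp h'))]
  · intro i j k hij hik hjk
    unfold cutVec
    by_cases h1 : sameSide (2 * m) i j <;> by_cases h2 : sameSide (2 * m) i k <;>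
      by_cases h3 : sameSide (2 * m) j k <;>
      simp only [h1, h2, h3, if_true, if_false] <;>
      try norm_num
    all_goals (exfalso; rw [sameSide_iff] at h1 h2 h3; tauto)
  · intro i j k hij hjk
    have h1 : i ≠ j := ne_of_lt hij
    have h2 : j ≠ k := ne_of_lt hjk
    have h3 : i ≠ k := ne_of_lt (hij.trans hjk)
    unfold cutVec
    by_cases g1 : sameSide (2 * m) i j <;> by_cases g2 : sameSide (2 * m) i k <;>
      by_cases g3 : sameSide (2 * m) j k <;>
      simp only [g1, g2, g3, if_true, if_false] <;>
      try norm_num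
    all_goals (exfalso; rw [sameSide_iff] at g1 g2 g3; tauto)
  · unfold pairSum cutVec
    have pt : ∀ i j : Fin (2 * m),
        (if i < j then (if sameSide (2 * m) i j then (0:ℝ) else 1) else 0)
          = if i < j ∧ ¬ sameSide (2 * m) i j then 1 else 0 := by
      intro i j
      by_cases h1 : i < j <;> by_cases h2 : sameSide (2 * m) i j <;> simp [h1, h2]
    have hrow : ∀ i : Fin (2 * m),
        (∑ j, if i < j ∧ ¬ sameSide (2 * m) i j then (1:ℝ) else 0)
          = if (i : ℕ) < m then (m : ℝ) else 0 := by
      intro i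
      rw [Finset.sum_boole]
      by_cases hi : (i : ℕ) < m
      · rw [if_pos hi]
        have he : univ.filter (fun j => i < j ∧ ¬ sameSide (2 * m) i j)
            = univ.filter (fun j : Fin (2 * m) => ¬ (j : ℕ) < m) := by
          ext j
          simp only [Finset.mem_filter, Finset.mem_univ, true_and, sameSide_iff]
          constructor
          · rintro ⟨-, hns⟩; tauto
          · intro hj
            refine ⟨?_, by tauto⟩
            have : (i : ℕ) < (j : ℕ) := by omega
            exact this
        rw [he, card_high]
      · rw [if_neg hi]
        have he : univ.filter (fun j => i < j ∧ ¬ sameSide (2 * m) i j) = ∅ := by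
          apply Finset.filter_eq_empty_iff.mpr
          intro j _
          rintro ⟨hlt, hns⟩
          rw [sameSide_iff] at hns
          have : (i : ℕ) < (j : ℕ) := hlt
          have : (j : ℕ) < m := by tauto
          omega
        rw [he]
        simp
    calc (∑ i, ∑ j, if i < j then (if sameSide (2 * m) i j then (0:ℝ) else 1) else 0)
        = ∑ i : Fin (2 * m), (if (i : ℕ) < m then (m : ℝ) else 0) := by
          apply Finset.sum_congr rfl; intro i _
          rw [← hrow i]
          exact Finset.sum_congr rfl (fun j _ => pt i j)
      _ = ((univ.filter (fun i : Fin (2 * m) => (i : ℕ) < m)).card : ℝ) * (m : ℝ) := by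
          rw [Finset.sum_ite, Finset.sum_const, Finset.sum_const]
          simp [mul_comm]
      _ = ((2 * m : ℕ) : ℝ) ^ 2 / 4 := by
          rw [card_low]
          push_cast
          ring

theorem det_recovery (hm : 2 ≤ m) (G : SimpleGraph (Fin (2 * m))) (α β : ℝ)
    (hα : 0 ≤ α) (hβ : 0 ≤ β) (hαβ : 2 * α + 2 * β < 1)
    (Hdeg : ∀ v, ((Dset m G v).card : ℝ) ≤ α * m)
    (Hnon : ∀ v, ((Nset m G v).card : ℝ) ≤ β * m) :
    LPrecovers (2 * m) G := by
  constructor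
  · exact cutVec_feasible
  · intro x hx
    obtain ⟨hsym, htri, hperi, hsum⟩ := hx
    have hOEx : OE m G x = 2 * LPobj (2 * m) G x := OE_eq hsym
    have hOEb : OE m G (cutVec (2 * m)) = 2 * LPobj (2 * m) G (cutVec (2 * m)) :=
      OE_eq (cutVec_feasible (m := m)).1
    have hkey := D2_ge hsym htri hperi hsum hm α β hα hβ Hdeg Hnon
    have hT2 : 0 ≤ T2 m x := T2_nonneg hsym htri hm
    have hc : (0:ℝ) < 1 - 2 * α - 2 * β := by linarith
    constructor
    · nlinarith
    · intro heq
      have hD0 : OE m G x - OE m G (cutVec (2 * m)) = 0 := by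
        rw [hOEx, hOEb, heq]; ring
      have hT0 : T2 m x = 0 := by nlinarith
      exact rigid hsym htri hperi hsum hm hT0

end SBM

namespace SBM

section Tail

variable {ι : Type*} [Fintype ι]

lemma all_measurable {s : Set (ι → Bool)} : MeasurableSet s :=
  s.toFinite.measurableSet

lemma bool_prob_sum (ν : Measure Bool) [IsProbabilityMeasure ν] :
    ν {true} + ν {false} = 1 := by
  have hdisj : Disjoint ({true} : Set Bool) {false} := by simp
  have hunion : ({true} : Set Bool) ∪ {false} = Set.univ := by
    ext c; cases c <;> simp
  rw [← measure_union hdisj (measurableSet_singleton _), hunion, measure_univ]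

lemma pi_singleton (pe : ι → ℝ) (ω : ι → Bool) :
    Measure.pi (fun c => bern (pe c)) {ω} = ∏ c, bern (pe c) {ω c} := by
  rw [← Set.univ_pi_singleton ω, Measure.pi_pi]

/-- Chernoff-type tail bound for the number of coordinates in `C` equal to `bv`. -/
lemma pi_tail (pe : ι → ℝ) (C : Finset ι) (bv : Bool) (θ : ℝ≥0∞)
    (hθ : ∀ c ∈ C, bern (pe c) {bv} ≤ θ) (r : ℝ≥0∞) (hr : 1 ≤ r) (hrtop : r ≠ ⊤) (t : ℕ) :
    Measure.pi (fun c => bern (pe c)) {ω | t ≤ (C.filter fun c => ω c = bv).card}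
      ≤ r⁻¹ ^ t * (1 + θ * (r - 1)) ^ C.card := by
  classical
  set μ := Measure.pi (fun c => bern (pe c)) with hμ
  set w : ι → Bool → ℝ≥0∞ := fun c b => bern (pe c) {b} with hw
  set s : ℝ≥0∞ := r - 1 with hs
  have hrs : r = s + 1 := by rw [hs, tsub_add_cancel_of_le hr]
  set g : ι → Bool → ℝ≥0∞ := fun c b => (if c ∈ C ∧ b = bv then r else 1) * w c b with hg
  set S : Set (ι → Bool) := {ω | t ≤ (C.filter fun c => ω c = bv).card} with hS
  set F : Finset (ι → Bool) := univ.filter (fun ω => ω ∈ S) with hF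
  have hr0 : r ≠ 0 := fun h => by simp [h] at hr
  have hwsum : ∀ c, w c true + w c false = 1 := fun c => bool_prob_sum (bern (pe c))
  have step1 : μ S ≤ ∑ ω ∈ F, μ {ω} := by
    have hsub : S ⊆ ⋃ ω ∈ F, {ω} := by
      intro ω hω
      simp only [Set.mem_iUnion]
      exact ⟨ω, by simp [hF, hω], rfl⟩
    exact (measure_mono hsub).trans (measure_biUnion_finset_le F _)
  have step2 : ∀ ω ∈ F, μ {ω} ≤ r⁻¹ ^ t * ∏ c, g c (ω c) := by
    intro ω hω
    have hωS : t ≤ (C.filter fun c => ω c = bv).card := by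
      simpa [hF, hS] using hω
    have hprod : ∏ c, g c (ω c)
        = r ^ (C.filter fun c => ω c = bv).card * ∏ c, w c (ω c) := by
      rw [hg]
      rw [Finset.prod_mul_distrib]
      congr 1
      rw [Finset.prod_ite (fun _ => r) (fun _ => (1:ℝ≥0∞)), Finset.prod_const,
        Finset.prod_const, one_pow, mul_one]
      congr 2
      ext c
      simp [Finset.mem_filter]
    rw [hprod, pi_singleton, ← mul_assoc]
    conv_lhs => rw [← one_mul (∏ c, bern (pe c) {ω c})]
    have hkey : (1:ℝ≥0∞) ≤ r⁻¹ ^ t * r ^ (C.filter fun c => ω c = bv).card := by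
      set k := (C.filter fun c => ω c = bv).card
      have h1 : r⁻¹ ^ t * r ^ k = r ^ (k - t) := by
        have hk : k = t + (k - t) := by omega
        conv_lhs => rw [hk]
        rw [pow_add, ← mul_assoc, ← mul_pow, ENNReal.inv_mul_cancel hr0 hrtop, one_pow, one_mul]
      rw [h1]
      exact one_le_pow_of_one_le' hr _
    exact mul_le_mul_left hkey _
  have step3 : (∑ ω ∈ F, (r⁻¹ ^ t * ∏ c, g c (ω c)))
      ≤ r⁻¹ ^ t * ∑ ω : ι → Bool, ∏ c, g c (ω c) := by
    rw [← Finset.mul_sum]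
    exact mul_le_mul_right (Finset.sum_le_sum_of_subset (Finset.filter_subset _ _)) _
  have step4 : (∑ ω : ι → Bool, ∏ c, g c (ω c)) = ∏ c, (g c true + g c false) := by
    have h := Finset.prod_univ_sum (fun _ : ι => (univ : Finset Bool)) g
    rw [Fintype.piFinset_univ] at h
    rw [← h]
    apply Finset.prod_congr rfl
    intro c _
    rw [Fintype.sum_bool]
  have step5 : ∀ c : ι, g c true + g c false ≤ if c ∈ C then 1 + θ * s else 1 := by
    intro c
    by_cases hc : c ∈ C
    · rw [if_pos hc]
      have hwθ : w c bv ≤ θ := hθ c hc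
      have hkey : g c true + g c false = s * w c bv + 1 := by
        cases bv
        · have e1 : g c true = w c true := by simp [hg, hc]
          have e2 : g c false = r * w c false := by simp [hg, hc]
          rw [e1, e2, hrs]
          calc w c true + (s + 1) * w c false = s * w c false + (w c true + w c false) := by ring
            _ = s * w c false + 1 := by rw [hwsum c]
        · have e1 : g c true = r * w c true := by simp [hg, hc]
          have e2 : g c false = w c false := by simp [hg, hc]
          rw [e1, e2, hrs]
          calc (s + 1) * w c true + w c false = s * w c true + (w c true + w c false) := by ring
            _ = s * w c true + 1 := by rw [hwsum c]
      rw [hkey, add_comm]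
      have : s * w c bv ≤ θ * s := by
        rw [mul_comm]
        exact mul_le_mul_left hwθ s
      exact add_le_add_right this 1
    · rw [if_neg hc]
      have e1 : g c true = w c true := by simp [hg, hc]
      have e2 : g c false = w c false := by simp [hg, hc]
      rw [e1, e2, hwsum c]
  have step6 : (∏ c, (g c true + g c false)) ≤ (1 + θ * s) ^ C.card := by
    calc (∏ c, (g c true + g c false))
        ≤ ∏ c, (if c ∈ C then 1 + θ * s else 1) := Finset.prod_le_prod' (fun c _ => step5 c)
      _ = (1 + θ * s) ^ C.card := by
          rw [Finset.prod_ite (fun _ => (1 + θ * s)) (fun _ => (1:ℝ≥0∞)), Finset.prod_const,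
            Finset.prod_const, one_pow, mul_one, Finset.filter_mem_eq_inter, Finset.univ_inter]
  calc μ S ≤ ∑ ω ∈ F, μ {ω} := step1
    _ ≤ ∑ ω ∈ F, (r⁻¹ ^ t * ∏ c, g c (ω c)) := Finset.sum_le_sum step2
    _ ≤ r⁻¹ ^ t * ∑ ω : ι → Bool, ∏ c, g c (ω c) := step3
    _ = r⁻¹ ^ t * ∏ c, (g c true + g c false) := by rw [step4]
    _ ≤ r⁻¹ ^ t * (1 + θ * s) ^ C.card := mul_le_mul_right step6 _

end Tail

end SBM

namespace SBM

section Tail2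

variable {ι : Type*} [Fintype ι]

lemma pi_tail' {κ : Type*} [Fintype κ] (pe : ι → ℝ) (K : Finset κ) (u : κ → ι)
    (hu : Set.InjOn u K) (bv : Bool) (θ : ℝ≥0∞)
    (hθ : ∀ k ∈ K, bern (pe (u k)) {bv} ≤ θ) (r : ℝ≥0∞) (hr : 1 ≤ r) (hrtop : r ≠ ⊤) (t : ℕ) :
    Measure.pi (fun c => bern (pe c)) {ω | t ≤ (K.filter fun k => ω (u k) = bv).card}
      ≤ r⁻¹ ^ t * (1 + θ * (r - 1)) ^ K.card := by
  classical
  have hcard : ∀ ω : ι → Bool,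
      (K.filter fun k => ω (u k) = bv).card = ((K.image u).filter fun c => ω c = bv).card := by
    intro ω
    rw [Finset.filter_image]
    rw [Finset.card_image_of_injOn (hu.mono (Finset.filter_subset _ _))]
  have hset : {ω : ι → Bool | t ≤ (K.filter fun k => ω (u k) = bv).card}
      = {ω | t ≤ ((K.image u).filter fun c => ω c = bv).card} := by
    ext ω; rw [Set.mem_setOf_eq, Set.mem_setOf_eq, hcard ω]
  rw [hset]
  have hKcard : (K.image u).card = K.card := Finset.card_image_of_injOn hu
  have hθ' : ∀ c ∈ K.image u, bern (pe c) {bv} ≤ θ := by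
    intro c hc
    obtain ⟨k, hk, rfl⟩ := Finset.mem_image.mp hc
    exact hθ k hk
  have := pi_tail pe (K.image u) bv θ hθ' r hr hrtop t
  rw [hKcard] at this
  exact this

end Tail2

section BernVal

lemma bern_true {p : ℝ} (hp1 : p ≤ 1) : bern p {true} = ENNReal.ofReal p := by
  unfold bern
  rw [PMF.toMeasure_apply_singleton _ _ (measurableSet_singleton _)]
  have : min (Real.toNNReal p) 1 = Real.toNNReal p :=
    min_eq_left (Real.toNNReal_le_one.mpr hp1)
  simp [PMF.bernoulli_apply, this, ENNReal.ofReal]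

lemma bern_false {p : ℝ} (hp0 : 0 ≤ p) (hp1 : p ≤ 1) :
    bern p {false} = ENNReal.ofReal (1 - p) := by
  unfold bern
  rw [PMF.toMeasure_apply_singleton _ _ (measurableSet_singleton _)]
  have hmin : min (Real.toNNReal p) 1 = Real.toNNReal p :=
    min_eq_left (Real.toNNReal_le_one.mpr hp1)
  simp only [PMF.bernoulli_apply, Bool.cond_false, hmin]
  rw [ENNReal.coe_sub, ENNReal.coe_one]
  change (1:ℝ≥0∞) - ENNReal.ofReal p = _
  rw [← ENNReal.ofReal_one, ← ENNReal.ofReal_sub _ hp0]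

end BernVal

section Dict

variable {m : ℕ}

def cpair {n : ℕ} (i j : Fin n) : Fin n × Fin n := if i < j then (i, j) else (j, i)

lemma graphOf_adj {n : ℕ} (ω : Fin n × Fin n → Bool) (i j : Fin n) :
    (graphOf ω).Adj i j ↔ i ≠ j ∧ ω (cpair i j) = true := by
  unfold graphOf cpair
  rw [SimpleGraph.fromRel_adj]
  constructor
  · rintro ⟨hne, h | h⟩
    · exact ⟨hne, by rw [if_pos h.1]; exact h.2⟩
    · have : ¬ i < j := by
        intro hlt
        exact absurd h.1 (lt_asymm hlt)
      exact ⟨hne, by rw [if_neg this]; exact h.2⟩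
  · rintro ⟨hne, h⟩
    refine ⟨hne, ?_⟩
    by_cases hlt : i < j
    · left; exact ⟨hlt, by rwa [if_pos hlt] at h⟩
    · right
      have : j < i := by
        rcases lt_trichotomy i j with h' | h' | h'
        · exact absurd h' hlt
        · exact absurd h' hne
        · exact h'
      exact ⟨this, by rwa [if_neg hlt] at h⟩

lemma cpair_injOn {n : ℕ} (v : Fin n) {K : Finset (Fin n)} (hK : ∀ k ∈ K, k ≠ v) :
    Set.InjOn (cpair v) K := by
  intro a ha b hb hab
  unfold cpair at hab
  have hav : a ≠ v := hK a ha
  have hbv : b ≠ v := hK b hb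
  by_cases h1 : v < a <;> by_cases h2 : v < b
  · rw [if_pos h1, if_pos h2] at hab
    exact congrArg Prod.snd hab
  · rw [if_pos h1, if_neg h2] at hab
    have e1 : v = b := congrArg Prod.fst hab
    exact absurd e1.symm hbv
  · rw [if_neg h1, if_pos h2] at hab
    have e1 : a = v := congrArg Prod.fst hab
    exact absurd e1 hav
  · rw [if_neg h1, if_neg h2] at hab
    exact congrArg Prod.fst hab

lemma sbmPe_cpair {p q : ℝ} {v k : Fin (2 * m)} (hvk : v ≠ k) :
    sbmPe (2 * m) p q (cpair v k) = if sameSide (2 * m) v k then p else q := by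
  unfold sbmPe cpair
  by_cases h : v < k
  · rw [if_pos h]
    simp only [if_pos h]
  · have hkv : k < v := by
      rcases lt_trichotomy v k with h' | h' | h'
      · exact absurd h' h
      · exact absurd h' hvk
      · exact h'
    rw [if_neg h]
    simp only [if_pos hkv]
    by_cases hs : sameSide (2 * m) v k
    · rw [if_pos (sameSide_comm.mp hs), if_pos hs]
    · rw [if_neg (fun h' => hs (sameSide_comm.mp h')), if_neg hs]

lemma Dset_coord (ω : Fin (2 * m) × Fin (2 * m) → Bool) (v : Fin (2 * m)) :
    Dset m (graphOf ω) v = (opp m v).filter (fun k => ω (cpair v k) = true) := by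
  unfold Dset
  apply Finset.filter_congr
  intro k hk
  rw [graphOf_adj]
  have : v ≠ k := Ne.symm (ne_of_mem_opp hk)
  simp [this]

lemma Nset_coord (ω : Fin (2 * m) × Fin (2 * m) → Bool) (v : Fin (2 * m)) :
    Nset m (graphOf ω) v = (sme m v).filter (fun j => ω (cpair v j) = false) := by
  unfold Nset
  apply Finset.filter_congr
  intro j hj
  rw [graphOf_adj]
  have hne : v ≠ j := Ne.symm (mem_sme.mp hj).1
  simp only [hne, true_and, not_true_eq_false, false_and, ne_eq, not_false_iff, true_iff]
  constructor
  · intro h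
    cases hval : ω (cpair v j)
    · rfl
    · exact absurd hval h
  · intro h h'
    rw [h] at h'
    exact Bool.false_ne_true h'

end Dict

end SBM

namespace SBM

section Numeric

lemma chern_num {θ ε : ℝ} (hθ0 : 0 < θ) (hε : 0 < ε) :
    ∃ δ : ℝ, 0 < δ ∧ 1 + θ * δ < (1 + δ) ^ (θ + ε) := by
  refine ⟨ε / (2 * θ), by positivity, ?_⟩
  set δ := ε / (2 * θ) with hδdef
  have hδ0 : 0 < δ := by positivity
  have h1δ : (0:ℝ) < 1 + δ := by linarith
  have hlog : δ / (1 + δ) ≤ Real.log (1 + δ) := by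
    have h := Real.log_le_sub_one_of_pos (x := (1 + δ)⁻¹) (by positivity)
    rw [Real.log_inv] at h
    have he : 1 - (1 + δ)⁻¹ = δ / (1 + δ) := by field_simp; ring
    linarith
  have hθδ : θ * δ = ε / 2 := by
    rw [hδdef]; field_simp
  have hlt : θ * δ < (θ + ε) * (δ / (1 + δ)) := by
    have he : (θ + ε) * (δ / (1 + δ)) = ((θ + ε) * δ) / (1 + δ) := by ring
    rw [he, lt_div_iff₀ h1δ]
    nlinarith [mul_pos hε hδ0]
  calc 1 + θ * δ ≤ Real.exp (θ * δ) := by linarith [Real.add_one_le_exp (θ * δ)]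
    _ < Real.exp ((θ + ε) * Real.log (1 + δ)) := by
        apply Real.exp_lt_exp.mpr
        calc θ * δ < (θ + ε) * (δ / (1 + δ)) := hlt
          _ ≤ (θ + ε) * Real.log (1 + δ) :=
              mul_le_mul_of_nonneg_left hlog (by positivity)
    _ = (1 + δ) ^ (θ + ε) := by rw [Real.rpow_def_of_pos h1δ, mul_comm]

lemma geom_limit {ρ : ℝ} (h0 : 0 < ρ) (h1 : ρ < 1) :
    Tendsto (fun m : ℕ => 2 * (m : ℝ) * ρ ^ m) atTop (nhds 0) := by
  have hinv : 1 < ρ⁻¹ := (one_lt_inv_iff₀).mpr ⟨h0, h1⟩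
  have hlo := isLittleO_pow_const_const_pow_of_one_lt (R := ℝ) 1 hinv
  have h := hlo.tendsto_div_nhds_zero
  have h2 := h.const_mul (2 : ℝ)
  rw [mul_zero] at h2
  convert h2 using 2 with n
  rw [pow_one, div_eq_mul_inv, inv_pow, inv_inv]
  ring

/-- the real geometric-type bound for one tail -/
lemma tail_real_bound {θr δ : ℝ} {γ : ℝ} (hθr : 0 ≤ θr) (hδ : 0 < δ) (hγ : 0 ≤ γ)
    (hkey : 1 + θr * δ < (1 + δ) ^ γ) (m k : ℕ) (hk : k ≤ m) :
    (1 + δ)⁻¹ ^ (⌈γ * m⌉₊) * (1 + θr * δ) ^ k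
      ≤ ((1 + θr * δ) / (1 + δ) ^ γ) ^ m := by
  have h1δ : (0:ℝ) < 1 + δ := by linarith
  have hbase : (0:ℝ) < (1 + δ) ^ γ := Real.rpow_pos_of_pos h1δ _
  have hc1 : (1:ℝ) ≤ 1 + θr * δ := by nlinarith
  -- (1+δ)⁻¹ ^ t ≤ ((1+δ)^γ)⁻¹ ^ m   for t = ceil (γ m)
  have hA : (1 + δ)⁻¹ ^ (⌈γ * m⌉₊) ≤ (((1 + δ) ^ γ) ^ m)⁻¹ := by
    rw [inv_pow, ← Real.rpow_natCast (1 + δ) (⌈γ * m⌉₊)]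
    rw [inv_le_inv₀ (Real.rpow_pos_of_pos h1δ _) (by positivity)]
    have e1 : ((1 + δ) ^ γ) ^ m = (1 + δ) ^ (γ * m) := by
      rw [← Real.rpow_natCast ((1 + δ) ^ γ) m, ← Real.rpow_mul (le_of_lt h1δ)]
    rw [e1]
    apply Real.rpow_le_rpow_of_exponent_le (by linarith)
    exact Nat.le_ceil _
  calc (1 + δ)⁻¹ ^ (⌈γ * m⌉₊) * (1 + θr * δ) ^ k
      ≤ (((1 + δ) ^ γ) ^ m)⁻¹ * (1 + θr * δ) ^ m := by
        apply mul_le_mul hA (pow_le_pow_right₀ hc1 hk) (by positivity) (by positivity)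
    _ = ((1 + θr * δ) / (1 + δ) ^ γ) ^ m := by
        rw [div_pow, div_eq_mul_inv, mul_comm]

lemma ofReal_bound {δ θr : ℝ} (hδ : 0 < δ) (hθ0 : 0 ≤ θr) (t k : ℕ) :
    (ENNReal.ofReal (1 + δ))⁻¹ ^ t
        * (1 + ENNReal.ofReal θr * (ENNReal.ofReal (1 + δ) - 1)) ^ k
      = ENNReal.ofReal ((1 + δ)⁻¹ ^ t * (1 + θr * δ) ^ k) := by
  have h1δ : (0:ℝ) < 1 + δ := by linarith
  have h1 : (ENNReal.ofReal (1 + δ))⁻¹ = ENNReal.ofReal ((1 + δ)⁻¹) :=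
    (ENNReal.ofReal_inv_of_pos h1δ).symm
  have h2 : ENNReal.ofReal (1 + δ) - 1 = ENNReal.ofReal δ := by
    rw [← ENNReal.ofReal_one, ← ENNReal.ofReal_sub _ (by norm_num : (0:ℝ) ≤ 1)]
    norm_num
  have h3 : (1 : ℝ≥0∞) + ENNReal.ofReal θr * ENNReal.ofReal δ
      = ENNReal.ofReal (1 + θr * δ) := by
    rw [← ENNReal.ofReal_mul hθ0, ← ENNReal.ofReal_one,
      ← ENNReal.ofReal_add (by norm_num) (by positivity)]
  rw [h1, h2, h3, ← ENNReal.ofReal_pow (by positivity), ← ENNReal.ofReal_pow (by positivity),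
    ← ENNReal.ofReal_mul (by positivity)]

end Numeric

end SBM

/-- Let `0 < q < p < 1` be constants with `p - q > 1/2`.  Then,
with high probability (as `n = 2m → ∞` along even `n`), for `G` drawn from the
stochastic block model `𝒢_{n,p,q}` the metric LP relaxation recovers the planted
bisection: the cut vector of the planted bisection is the unique optimal solution
of (LP-P). -/
theorem sbm_lp_recovery_very_dense (p q : ℝ)
    (hq : 0 < q) (hqp : q < p) (hp : p < 1) (hgap : p - q > 1 / 2) :
    Tendsto (fun m : ℕ =>
      graphMeasure (2 * m) (sbmPe (2 * m) p q)
        {ω | LPrecovers (2 * m) (graphOf ω)})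
      atTop (nhds 1) := by
  classical
  set ε : ℝ := (2 * (p - q) - 1) / 8 with hεdef
  have hε : 0 < ε := by rw [hεdef]; linarith
  set α : ℝ := q + ε with hαdef
  set β : ℝ := (1 - p) + ε with hβdef
  have hα0 : 0 ≤ α := by rw [hαdef]; linarith
  have hβ0 : 0 ≤ β := by rw [hβdef]; linarith
  have hαβ : 2 * α + 2 * β < 1 := by rw [hαdef, hβdef, hεdef]; linarith
  have hp0 : (0:ℝ) ≤ p := by linarith
  have hp1 : p ≤ 1 := le_of_lt hp
  have hq1 : q ≤ 1 := by linarith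
  have h1p0 : (0:ℝ) < 1 - p := by linarith
  obtain ⟨δ₁, hδ₁, hkey₁⟩ := SBM.chern_num hq hε
  obtain ⟨δ₂, hδ₂, hkey₂⟩ := SBM.chern_num h1p0 hε
  rw [← hαdef] at hkey₁
  rw [← hβdef] at hkey₂
  set ρ₁ : ℝ := (1 + q * δ₁) / (1 + δ₁) ^ α with hρ₁def
  set ρ₂ : ℝ := (1 + (1 - p) * δ₂) / (1 + δ₂) ^ β with hρ₂def
  have hb₁ : (0:ℝ) < (1 + δ₁) ^ α := Real.rpow_pos_of_pos (by linarith) _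
  have hb₂ : (0:ℝ) < (1 + δ₂) ^ β := Real.rpow_pos_of_pos (by linarith) _
  have hρ₁pos : 0 < ρ₁ := by
    rw [hρ₁def]; apply div_pos _ hb₁; nlinarith [mul_pos hq hδ₁]
  have hρ₂pos : 0 < ρ₂ := by
    rw [hρ₂def]; apply div_pos _ hb₂; nlinarith [mul_pos h1p0 hδ₂]
  have hρ₁lt : ρ₁ < 1 := by rw [hρ₁def]; exact (div_lt_one hb₁).mpr hkey₁
  have hρ₂lt : ρ₂ < 1 := by rw [hρ₂def]; exact (div_lt_one hb₂).mpr hkey₂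
  set A : ℕ → ℝ := fun m => (1 + δ₁)⁻¹ ^ (⌈α * m⌉₊) * (1 + q * δ₁) ^ m with hAdef
  set B : ℕ → ℝ := fun m => (1 + δ₂)⁻¹ ^ (⌈β * m⌉₊) * (1 + (1 - p) * δ₂) ^ (m - 1) with hBdef
  have hA0 : ∀ m, 0 ≤ A m := fun m => by rw [hAdef]; positivity
  have hB0 : ∀ m, 0 ≤ B m := fun m => by rw [hBdef]; positivity
  set U : ℕ → ℝ≥0∞ := fun m => ENNReal.ofReal (2 * m * (A m + B m)) with hUdef
  -- U tends to 0
  have hA_le : ∀ m : ℕ, A m ≤ ρ₁ ^ m := fun m =>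
    SBM.tail_real_bound (le_of_lt hq) hδ₁ hα0 hkey₁ m m le_rfl
  have hB_le : ∀ m : ℕ, B m ≤ ρ₂ ^ m := fun m =>
    SBM.tail_real_bound (le_of_lt h1p0) hδ₂ hβ0 hkey₂ m (m - 1) (Nat.sub_le m 1)
  have hg : Tendsto (fun m : ℕ => 2 * (m:ℝ) * ρ₁ ^ m + 2 * (m:ℝ) * ρ₂ ^ m) atTop (nhds 0) := by
    have := (SBM.geom_limit hρ₁pos hρ₁lt).add (SBM.geom_limit hρ₂pos hρ₂lt)
    simpa using this
  have hu' : Tendsto (fun m : ℕ => 2 * (m:ℝ) * (A m + B m)) atTop (nhds 0) := by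
    apply squeeze_zero (fun m => by positivity) _ hg
    intro m
    have h1 : 2 * (m:ℝ) * (A m + B m) = 2 * (m:ℝ) * A m + 2 * (m:ℝ) * B m := by ring
    rw [h1]
    have hm0 : (0:ℝ) ≤ 2 * (m:ℝ) := by positivity
    exact add_le_add (mul_le_mul_of_nonneg_left (hA_le m) hm0)
      (mul_le_mul_of_nonneg_left (hB_le m) hm0)
  have hU0 : Tendsto U atTop (nhds 0) := by
    have := ENNReal.tendsto_ofReal hu'
    simpa [hUdef] using this
  have hlow : Tendsto (fun m : ℕ => 1 - U m) atTop (nhds 1) := by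
    have h := ENNReal.Tendsto.sub
      (tendsto_const_nhds : Tendsto (fun _ : ℕ => (1:ℝ≥0∞)) atTop (nhds 1)) hU0
      (Or.inl (by norm_num))
    simpa using h
  apply tendsto_of_tendsto_of_tendsto_of_le_of_le' hlow tendsto_const_nhds
  · -- eventual lower bound
    filter_upwards [eventually_ge_atTop 2] with m hm
    set μ := graphMeasure (2 * m) (sbmPe (2 * m) p q) with hμdef
    haveI : IsProbabilityMeasure μ := by
      rw [hμdef]; unfold graphMeasure; infer_instance
    set td := ⌈α * m⌉₊ with htddef
    set tn := ⌈β * m⌉₊ with htndef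
    set Good : Set (Fin (2 * m) × Fin (2 * m) → Bool) :=
      {ω | ∀ v : Fin (2 * m),
        ((((SBM.opp m v).filter (fun k => ω (SBM.cpair v k) = true)).card : ℝ) ≤ α * m) ∧
        ((((SBM.sme m v).filter (fun j => ω (SBM.cpair v j) = false)).card : ℝ) ≤ β * m)}
      with hGooddef
    have hsubGood : Good ⊆ {ω | LPrecovers (2 * m) (graphOf ω)} := by
      intro ω hω
      have hωv : ∀ v : Fin (2 * m),
          ((((SBM.opp m v).filter (fun k => ω (SBM.cpair v k) = true)).card : ℝ) ≤ α * m) ∧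
          ((((SBM.sme m v).filter (fun j => ω (SBM.cpair v j) = false)).card : ℝ) ≤ β * m) := hω
      apply SBM.det_recovery hm (graphOf ω) α β hα0 hβ0 hαβ
      · intro v; rw [SBM.Dset_coord]; exact (hωv v).1
      · intro v; rw [SBM.Nset_coord]; exact (hωv v).2
    have htail_d : ∀ v : Fin (2 * m),
        μ {ω | td ≤ ((SBM.opp m v).filter (fun k => ω (SBM.cpair v k) = true)).card}
          ≤ ENNReal.ofReal (A m) := by
      intro v
      have hinj : Set.InjOn (SBM.cpair v) (SBM.opp m v) :=
        SBM.cpair_injOn v (fun k hk => SBM.ne_of_mem_opp hk)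
      have hθ : ∀ k ∈ SBM.opp m v,
          bern (sbmPe (2 * m) p q (SBM.cpair v k)) {true} ≤ ENNReal.ofReal q := by
        intro k hk
        rw [SBM.sbmPe_cpair (Ne.symm (SBM.ne_of_mem_opp hk)), if_neg (SBM.mem_opp.mp hk),
          SBM.bern_true hq1]
      have h := SBM.pi_tail' (sbmPe (2 * m) p q) (SBM.opp m v) (SBM.cpair v) hinj true
        (ENNReal.ofReal q) hθ (ENNReal.ofReal (1 + δ₁))
        (by rw [← ENNReal.ofReal_one]; exact ENNReal.ofReal_le_ofReal (by linarith))
        ENNReal.ofReal_ne_top td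
      rw [SBM.card_opp, SBM.ofReal_bound hδ₁ (le_of_lt hq) td m] at h
      exact h
    have htail_n : ∀ v : Fin (2 * m),
        μ {ω | tn ≤ ((SBM.sme m v).filter (fun j => ω (SBM.cpair v j) = false)).card}
          ≤ ENNReal.ofReal (B m) := by
      intro v
      have hne : ∀ j ∈ SBM.sme m v, j ≠ v := fun j hj => (SBM.mem_sme.mp hj).1
      have hinj : Set.InjOn (SBM.cpair v) (SBM.sme m v) := SBM.cpair_injOn v hne
      have hθ : ∀ j ∈ SBM.sme m v,
          bern (sbmPe (2 * m) p q (SBM.cpair v j)) {false} ≤ ENNReal.ofReal (1 - p) := by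
        intro j hj
        rw [SBM.sbmPe_cpair (Ne.symm (hne j hj)), if_pos (SBM.mem_sme.mp hj).2,
          SBM.bern_false hp0 hp1]
      have h := SBM.pi_tail' (sbmPe (2 * m) p q) (SBM.sme m v) (SBM.cpair v) hinj false
        (ENNReal.ofReal (1 - p)) hθ (ENNReal.ofReal (1 + δ₂))
        (by rw [← ENNReal.ofReal_one]; exact ENNReal.ofReal_le_ofReal (by linarith))
        ENNReal.ofReal_ne_top tn
      rw [SBM.card_sme, SBM.ofReal_bound hδ₂ (le_of_lt h1p0) tn (m - 1)] at h
      exact h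
    have hbad : μ Goodᶜ ≤ U m := by
      have hsub : Goodᶜ ⊆ ⋃ v ∈ (Finset.univ : Finset (Fin (2 * m))),
          ({ω | td ≤ ((SBM.opp m v).filter (fun k => ω (SBM.cpair v k) = true)).card}
            ∪ {ω | tn ≤ ((SBM.sme m v).filter (fun j => ω (SBM.cpair v j) = false)).card}) := by
        intro ω hω
        rw [Set.mem_compl_iff, hGooddef, Set.mem_setOf_eq] at hω
        push_neg at hω
        obtain ⟨v, hv⟩ := hω
        simp only [Set.mem_iUnion]
        refine ⟨v, Finset.mem_univ v, ?_⟩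
        by_cases hd : (((SBM.opp m v).filter (fun k => ω (SBM.cpair v k) = true)).card : ℝ) ≤ α * m
        · right
          have h2 := hv hd
          exact Nat.ceil_le.mpr (le_of_lt h2)
        · left
          exact Nat.ceil_le.mpr (le_of_lt (not_le.mp hd))
      calc μ Goodᶜ
          ≤ ∑ v ∈ (Finset.univ : Finset (Fin (2 * m))),
              μ ({ω | td ≤ ((SBM.opp m v).filter (fun k => ω (SBM.cpair v k) = true)).card}
                ∪ {ω | tn ≤ ((SBM.sme m v).filter (fun j => ω (SBM.cpair v j) = false)).card}) :=
            (measure_mono hsub).trans (measure_biUnion_finset_le _ _)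
        _ ≤ ∑ _v ∈ (Finset.univ : Finset (Fin (2 * m))),
              (ENNReal.ofReal (A m) + ENNReal.ofReal (B m)) :=
            Finset.sum_le_sum (fun v _ =>
              (measure_union_le _ _).trans (add_le_add (htail_d v) (htail_n v)))
        _ = ((2 * m : ℕ) : ℝ≥0∞) * (ENNReal.ofReal (A m) + ENNReal.ofReal (B m)) := by
            rw [Finset.sum_const, Finset.card_univ, Fintype.card_fin, nsmul_eq_mul]
        _ = U m := by
            rw [hUdef]
            rw [← ENNReal.ofReal_natCast (2 * m), ← ENNReal.ofReal_add (hA0 m) (hB0 m),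
              ← ENNReal.ofReal_mul (by positivity)]
            congr 1
            push_cast
            ring
    have hcompl : μ Good + μ Goodᶜ = 1 :=
      (measure_add_measure_compl SBM.all_measurable).trans measure_univ
    have h1 : 1 - U m ≤ μ Good := by
      rw [tsub_le_iff_right]
      calc (1:ℝ≥0∞) = μ Good + μ Goodᶜ := hcompl.symm
        _ ≤ μ Good + U m := add_le_add_right hbad _
    exact h1.trans (measure_mono hsubGood)
  · apply Filter.Eventually.of_forall
    intro m
    haveI : IsProbabilityMeasure (graphMeasure (2 * m) (sbmPe (2 * m) p q)) := by
      unfold graphMeasure; infer_instance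
    exact prob_le_one
end
end
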